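/- arXiv:1002.0440 — 3 statements merged into one kernel-verified Lean document; each statement's English description precedes it below -/
import Mathlib

section
/- For an element w of the hyperoctahedral group B_n, the absolute length ℓ_T(w) equals n minus the number of paired cycles of w, where T is the set of all reflections of B_n. -/
open scoped Classical

/-- Minimal length of `w` as a product of elements of `T`. -/
noncomputable def wordLen {G : Type*} [Group G] (T : Set G) (w : G) : ℕ :=
  sInf {k | ∃ l : List G, l.length = k ∧ (∀ t ∈ l, t ∈ T) ∧ l.prod = w}

/-- The absolute order: `u ⪯ v` iff `ℓ_T(u) + ℓ_T(u⁻¹v) = ℓ_T(v)`. -/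
def absLe {G : Type*} [Group G] (T : Set G) (u v : G) : Prop :=
  wordLen T u + wordLen T (u⁻¹ * v) = wordLen T v

/-- We model the set `{±1, …, ±n}` as `Fin n × Bool`; negation flips the Boolean. -/
def negp {n : ℕ} (p : Fin n × Bool) : Fin n × Bool := (p.1, !p.2)

/-- The hyperoctahedral group `B_n`: permutations `w` of `{±1,…,±n}` with
`w(-i) = -w(i)`. -/
def inB {n : ℕ} (w : Equiv.Perm (Fin n × Bool)) : Prop :=
  ∀ p, w (negp p) = negp (w p)

/-- The set of reflections of `B_n`: balanced reflections `[i]` and paired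
reflections `((i,j))`, `((i,-j))`. -/
def reflB (n : ℕ) : Set (Equiv.Perm (Fin n × Bool)) :=
  {σ | (∃ i : Fin n, σ = Equiv.swap (i, true) (i, false)) ∨
    (∃ i j : Fin n, i ≠ j ∧
      σ = Equiv.swap (i, true) (j, true) * Equiv.swap (i, false) (j, false)) ∨
    (∃ i j : Fin n, i ≠ j ∧
      σ = Equiv.swap (i, true) (j, false) * Equiv.swap (i, false) (j, true))}

/-- `O` is an orbit (cycle) of the signed permutation `w`. -/
def isOrbit {n : ℕ} (w : Equiv.Perm (Fin n × Bool)) (O : Set (Fin n × Bool)) : Prop :=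
  ∃ p, O = {q | w.SameCycle p q}

/-- A balanced cycle of `w` corresponds to an orbit which is stable under negation;
a balanced `k`-cycle is a balanced orbit of cardinality `2k`. -/
def balancedOrbit {n : ℕ} (w : Equiv.Perm (Fin n × Bool)) (O : Set (Fin n × Bool)) : Prop :=
  isOrbit w O ∧ negp '' O = O

/-- The number of paired cycles of `w ∈ B_n` (fixed points count as paired
1-cycles): non-balanced orbits come in pairs `{O, -O}`, each such pair being one
paired cycle. -/
noncomputable def pairedCycles {n : ℕ} (w : Equiv.Perm (Fin n × Bool)) : ℕ :=
  Nat.card {O : Set (Fin n × Bool) // isOrbit w O ∧ negp '' O ≠ O} / 2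

namespace Stmt5


variable {n : ℕ}

lemma negp_negp (p : Fin n × Bool) : negp (negp p) = p := by
  simp [negp]

lemma negp_ne (p : Fin n × Bool) : negp p ≠ p := by
  simp [negp, Prod.ext_iff]

lemma negp_inj : Function.Injective (negp (n := n)) :=
  Function.Involutive.injective negp_negp

/-- B_n as a subgroup. -/
def Bsub (n : ℕ) : Subgroup (Equiv.Perm (Fin n × Bool)) where
  carrier := {w | inB w}
  one_mem' := by intro p; rfl
  mul_mem' := by
    intro a b ha hb p
    simp only [Equiv.Perm.mul_apply, ha, hb]
    rw [hb p, ha]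
  inv_mem' := by
    intro a ha p
    have := ha (a⁻¹ p)
    rw [show a (a⁻¹ p) = p from by simp] at this
    rw [← this]
    simp

lemma inB_iff (w : Equiv.Perm (Fin n × Bool)) : inB w ↔ w ∈ Bsub n := Iff.rfl

lemma inB_zpow {w : Equiv.Perm (Fin n × Bool)} (hw : inB w) (k : ℤ) : inB (w ^ k) := by
  rw [inB_iff] at hw ⊢; exact zpow_mem hw k

/-- Odd functions. -/
def OddS (n : ℕ) : Submodule ℝ ((Fin n × Bool) → ℝ) where
  carrier := {f | ∀ p, f (negp p) = -f p}
  zero_mem' := by intro p; simp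
  add_mem' := by intro f g hf hg p; simp [hf p, hg p]; ring
  smul_mem' := by intro c f hf p; simp [hf p]

/-- Functions fixed by `w` (constant along `w`). -/
def FixS (w : Equiv.Perm (Fin n × Bool)) : Submodule ℝ ((Fin n × Bool) → ℝ) where
  carrier := {f | ∀ p, f (w p) = f p}
  zero_mem' := by intro p; simp
  add_mem' := by intro f g hf hg p; simp [hf p, hg p]
  smul_mem' := by intro c f hf p; simp [hf p]

def FO (w : Equiv.Perm (Fin n × Bool)) : Submodule ℝ ((Fin n × Bool) → ℝ) :=
  FixS w ⊓ OddS n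

lemma mem_FO {w : Equiv.Perm (Fin n × Bool)} {f : (Fin n × Bool) → ℝ} :
    f ∈ FO w ↔ (∀ p, f (w p) = f p) ∧ (∀ p, f (negp p) = -f p) := Iff.rfl

/-- Odd functions form a space of dimension `n`. -/
noncomputable def oddEquiv (n : ℕ) : OddS n ≃ₗ[ℝ] (Fin n → ℝ) where
  toFun f := fun i => (f : (Fin n × Bool) → ℝ) (i, true)
  map_add' f g := rfl
  map_smul' c f := rfl
  invFun g := ⟨fun p => if p.2 then g p.1 else -g p.1, by
    rintro ⟨i, b⟩; cases b <;> simp [negp]⟩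
  left_inv := by
    rintro ⟨f, hf⟩
    ext ⟨i, b⟩
    cases b
    · simpa [negp] using (hf (i, true)).symm ▸ (by
        have := hf (i, true)
        simp [negp] at this
        simp [this])
    · simp
  right_inv g := by ext i; simp

lemma finrank_OddS : Module.finrank ℝ (OddS n) = n := by
  rw [(oddEquiv n).finrank_eq]
  simp

lemma finrank_FO_le (w : Equiv.Perm (Fin n × Bool)) :
    Module.finrank ℝ (FO w) ≤ n := by
  have h := Submodule.finrank_mono (inf_le_right : FO w ≤ OddS n)
  rwa [finrank_OddS] at h

lemma FO_one : FO (1 : Equiv.Perm (Fin n × Bool)) = OddS n := by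
  ext f
  rw [mem_FO]
  constructor
  · exact fun h => h.2
  · exact fun h => ⟨fun p => rfl, h⟩

lemma finrank_FO_one : Module.finrank ℝ (FO (1 : Equiv.Perm (Fin n × Bool))) = n := by
  rw [FO_one, finrank_OddS]


variable {n : ℕ}

@[simp] lemma negp_inj_iff {a b : Fin n × Bool} : negp a = negp b ↔ a = b :=
  negp_inj.eq_iff

lemma negp_ne_symm (p : Fin n × Bool) : p ≠ negp p := fun h => negp_ne p h.symm

lemma negp_eq_iff {a b : Fin n × Bool} : negp a = b ↔ a = negp b :=
  ⟨fun h => by rw [← h, negp_negp], fun h => by rw [h, negp_negp]⟩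

lemma swap_disjoint_comm {α : Type*} [DecidableEq α] {a b c d : α}
    (hac : a ≠ c) (had : a ≠ d) (hbc : b ≠ c) (hbd : b ≠ d) :
    Equiv.swap a b * Equiv.swap c d = Equiv.swap c d * Equiv.swap a b := by
  have : (Equiv.swap a b).Disjoint (Equiv.swap c d) := by
    intro x
    by_cases hxa : x = a
    · subst hxa; right; exact Equiv.swap_apply_of_ne_of_ne hac had
    by_cases hxb : x = b
    · subst hxb; right; exact Equiv.swap_apply_of_ne_of_ne hbc hbd
    · left; exact Equiv.swap_apply_of_ne_of_ne hxa hxb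
  exact this.commute.eq

/-- The reflection moving `p` to `q`. -/
noncomputable def reflT (p q : Fin n × Bool) : Equiv.Perm (Fin n × Bool) :=
  if q = negp p then Equiv.swap p q
  else Equiv.swap p q * Equiv.swap (negp p) (negp q)

lemma reflT_apply (p q : Fin n × Bool) (hpq : q ≠ p) (r : Fin n × Bool) :
    reflT p q r =
      if r = p then q else if r = q then p else
      if r = negp p then negp q else if r = negp q then negp p else r := by
  unfold reflT
  by_cases hA : q = negp p
  · rw [if_pos hA]
    have hnq : negp q = p := by rw [hA, negp_negp]
    split_ifs with h1 h2 h3 h4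
    · rw [h1, Equiv.swap_apply_left]
    · rw [h2, Equiv.swap_apply_right]
    · exact absurd (h3.trans hA.symm) h2
    · exact absurd (h4.trans hnq) h1
    · exact Equiv.swap_apply_of_ne_of_ne h1 h2
  · rw [if_neg hA]
    have h1 : p ≠ negp p := (negp_ne p).symm
    have h2 : p ≠ negp q := fun h => hA (by rw [h, negp_negp])
    have h3 : q ≠ negp p := hA
    have h4 : q ≠ negp q := (negp_ne q).symm
    simp only [Equiv.Perm.mul_apply]
    split_ifs with e1 e2 e3 e4
    · rw [e1, Equiv.swap_apply_of_ne_of_ne h1 h2, Equiv.swap_apply_left]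
    · rw [e2, Equiv.swap_apply_of_ne_of_ne h3 h4, Equiv.swap_apply_right]
    · rw [e3, Equiv.swap_apply_left (negp p) (negp q)]
      exact Equiv.swap_apply_of_ne_of_ne (fun h => h2 h.symm) (negp_ne q)
    · rw [e4, Equiv.swap_apply_right (negp p) (negp q)]
      exact Equiv.swap_apply_of_ne_of_ne (negp_ne p) (fun h => h3 h.symm)
    · rw [Equiv.swap_apply_of_ne_of_ne e3 e4, Equiv.swap_apply_of_ne_of_ne e1 e2]

lemma reflT_mul_self (p q : Fin n × Bool) (hpq : q ≠ p) :
    reflT p q * reflT p q = 1 := by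
  unfold reflT
  by_cases hA : q = negp p
  · rw [if_pos hA, Equiv.swap_mul_self]
  · rw [if_neg hA]
    have h1 : p ≠ negp p := (negp_ne p).symm
    have h2 : p ≠ negp q := fun h => hA (by rw [h, negp_negp])
    have h3 : q ≠ negp p := hA
    have h4 : q ≠ negp q := (negp_ne q).symm
    have comm : Equiv.swap (negp p) (negp q) * Equiv.swap p q
        = Equiv.swap p q * Equiv.swap (negp p) (negp q) :=
      swap_disjoint_comm (fun h => h1 (h.symm)) (fun h => h3 h.symm)
        (fun h => h2 h.symm) (fun h => h4 h.symm)
    rw [mul_assoc, ← mul_assoc (Equiv.swap (negp p) (negp q)), comm, mul_assoc,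
      Equiv.swap_mul_self, mul_one, Equiv.swap_mul_self]

lemma reflT_inB (p q : Fin n × Bool) (hpq : q ≠ p) : inB (reflT p q) := by
  intro r
  rw [reflT_apply p q hpq, reflT_apply p q hpq]
  simp only [negp_eq_iff, negp_negp]
  split_ifs <;> (try subst r) <;> simp_all [negp_negp, negp_ne, negp_ne_symm]

lemma reflT_mem (p q : Fin n × Bool) (hpq : q ≠ p) : reflT p q ∈ reflB n := by
  obtain ⟨i, bp⟩ := p
  obtain ⟨j, bq⟩ := q
  unfold reflT
  by_cases hA : ((j, bq) : Fin n × Bool) = negp (i, bp)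
  · rw [if_pos hA]
    simp only [negp, Prod.mk.injEq] at hA
    obtain ⟨rfl, rfl⟩ := hA
    left
    refine ⟨j, ?_⟩
    cases bp
    · exact Equiv.swap_comm _ _
    · rfl
  · rw [if_neg hA]
    have hij : i ≠ j := by
      rintro rfl
      cases bp <;> cases bq <;> simp_all [negp, Prod.ext_iff]
    have hji : j ≠ i := hij.symm
    simp only [negp]
    cases bp <;> cases bq <;> simp only [Bool.not_true, Bool.not_false]
    · -- (i,false),(j,false)
      right; left
      refine ⟨i, j, hij, ?_⟩
      exact (swap_disjoint_comm (a := ((i, false) : Fin n × Bool)) (b := (j, false))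
        (c := (i, true)) (d := (j, true)) (by simp) (by simp) (by simp) (by simp))
    · -- (i,false),(j,true)
      right; right
      refine ⟨i, j, hij, ?_⟩
      exact (swap_disjoint_comm (a := ((i, false) : Fin n × Bool)) (b := (j, true))
        (c := (i, true)) (d := (j, false)) (by simp) (by simp [Prod.ext_iff, hij])
        (by simp [Prod.ext_iff, hji]) (by simp))
    · -- (i,true),(j,false)
      right; right
      exact ⟨i, j, hij, rfl⟩
    · right; left
      exact ⟨i, j, hij, rfl⟩


variable {n : ℕ}

variable {w : Equiv.Perm (Fin n × Bool)}

/-- The orbit of `p`. -/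
def orb (w : Equiv.Perm (Fin n × Bool)) (p : Fin n × Bool) : Set (Fin n × Bool) :=
  {q | w.SameCycle p q}

lemma mem_orb_self (p : Fin n × Bool) : p ∈ orb w p := Equiv.Perm.SameCycle.refl w p

lemma isOrbit_orb (p : Fin n × Bool) : isOrbit w (orb w p) := ⟨p, rfl⟩

lemma orb_eq_of_sameCycle {p q : Fin n × Bool} (h : w.SameCycle p q) :
    orb w p = orb w q := by
  ext r
  exact ⟨fun hr => h.symm.trans hr, fun hr => h.trans hr⟩

lemma orb_apply (p : Fin n × Bool) : orb w (w p) = orb w p :=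
  (orb_eq_of_sameCycle (Equiv.Perm.sameCycle_apply_right.mpr (Equiv.Perm.SameCycle.refl w p))).symm

lemma zpow_negp (hw : inB w) (k : ℤ) (p : Fin n × Bool) :
    (w ^ k) (negp p) = negp ((w ^ k) p) := inB_zpow hw k p

lemma sameCycle_negp (hw : inB w) {p q : Fin n × Bool} :
    w.SameCycle (negp p) (negp q) ↔ w.SameCycle p q := by
  constructor
  · rintro ⟨k, hk⟩
    exact ⟨k, negp_inj (by rw [← zpow_negp hw k p, hk])⟩
  · rintro ⟨k, hk⟩
    exact ⟨k, by rw [zpow_negp hw k p, hk]⟩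

lemma image_negp_orb (hw : inB w) (p : Fin n × Bool) :
    negp '' orb w p = orb w (negp p) := by
  ext x
  constructor
  · rintro ⟨y, hy, rfl⟩
    exact (sameCycle_negp hw).mpr hy
  · intro hx
    refine ⟨negp x, ?_, negp_negp x⟩
    have := (sameCycle_negp hw (p := negp p) (q := x)).symm
    exact (sameCycle_negp hw).mp (by rwa [negp_negp])

lemma image_negp_image_negp (S : Set (Fin n × Bool)) : negp '' (negp '' S) = S := by
  rw [← Set.image_comp]
  have : negp ∘ negp = (id : Fin n × Bool → Fin n × Bool) := funext negp_negp
  rw [this, Set.image_id]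

/-- The type of non-balanced orbits. -/
abbrev A (w : Equiv.Perm (Fin n × Bool)) :=
  {O : Set (Fin n × Bool) // isOrbit w O ∧ negp '' O ≠ O}

/-- Negation as an involution on non-balanced orbits. -/
def iota (hw : inB w) (a : A w) : A w :=
  ⟨negp '' a.1, by
    obtain ⟨p, hp⟩ := a.2.1
    exact ⟨negp p, by rw [hp]; exact (image_negp_orb hw p : _)⟩, by
    rw [image_negp_image_negp]
    exact fun h => a.2.2 h.symm⟩

lemma iota_iota (hw : inB w) (a : A w) : iota hw (iota hw a) = a :=
  Subtype.ext (image_negp_image_negp a.1)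

lemma iota_ne (hw : inB w) (a : A w) : iota hw a ≠ a :=
  fun h => a.2.2 (congrArg Subtype.val h)

/-- Pairing up `O` and `-O`. -/
def pairSetoid (hw : inB w) : Setoid (A w) where
  r a b := b = a ∨ b = iota hw a
  iseqv := by
    constructor
    · intro a; left; rfl
    · rintro a b (rfl | rfl)
      · left; rfl
      · right; rw [iota_iota]
    · rintro a b c (rfl | rfl) h
      · exact h
      · rcases h with rfl | rfl
        · right; rfl
        · left; rw [iota_iota]

abbrev Q (hw : inB w) := Quotient (pairSetoid hw)

lemma fiber_card (hw : inB w) (q : Q hw) :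
    Nat.card {a : A w // (⟦a⟧ : Q hw) = q} = 2 := by
  rw [Nat.card_eq_two_iff]
  refine ⟨⟨q.out, Quotient.out_eq q⟩, ⟨iota hw q.out, ?_⟩, ?_, ?_⟩
  · calc (⟦iota hw q.out⟧ : Q hw) = ⟦q.out⟧ :=
        Quotient.sound (Or.inr (iota_iota hw q.out).symm)
      _ = q := Quotient.out_eq q
  · intro h
    exact iota_ne hw q.out (congrArg Subtype.val h).symm
  · rw [Set.eq_univ_iff_forall]
    rintro ⟨a, ha⟩
    have key : a = q.out ∨ a = iota hw q.out := by
      have h0 : (⟦a⟧ : Q hw) = ⟦q.out⟧ := by rw [ha]; exact (Quotient.out_eq q).symm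
      have h2 : q.out = a ∨ q.out = iota hw a := Quotient.exact h0
      rcases h2 with h3 | h3
      · left; exact h3.symm
      · right; rw [h3, iota_iota]
    rcases key with rfl | rfl
    · left; rfl
    · right
      simp only [Set.mem_singleton_iff]
    
lemma card_A (hw : inB w) : Nat.card (A w) = Nat.card (Q hw) * 2 := by
  rw [Nat.card_eq_fintype_card, Nat.card_eq_fintype_card,
    Fintype.card_congr (Equiv.sigmaFiberEquiv (fun a : A w => (⟦a⟧ : Q hw))).symm,
    Fintype.card_sigma]
  have : ∀ q : Q hw, Fintype.card {a : A w // (⟦a⟧ : Q hw) = q} = 2 := by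
    intro q
    rw [← Nat.card_eq_fintype_card, fiber_card hw q]
  simp only [this, Finset.sum_const, Finset.card_univ, smul_eq_mul]

lemma pairedCycles_eq (hw : inB w) : pairedCycles w = Nat.card (Q hw) := by
  unfold pairedCycles
  rw [show {O : Set (Fin n × Bool) // isOrbit w O ∧ negp '' O ≠ O} = A w from rfl, card_A hw]
  omega


/-- Condition for a set to be a non-balanced orbit. -/
lemma cond_negp (hw : inB w) {O : Set (Fin n × Bool)}
    (h : isOrbit w (negp '' O) ∧ negp '' (negp '' O) ≠ negp '' O) :
    isOrbit w O ∧ negp '' O ≠ O := by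
  constructor
  · obtain ⟨p, hp⟩ := h.1
    refine ⟨negp p, ?_⟩
    have : negp '' (negp '' O) = negp '' orb w p := by rw [hp]; rfl
    rw [image_negp_image_negp] at this
    rw [this, image_negp_orb hw]
    rfl
  · intro hc
    apply h.2
    rw [image_negp_image_negp, hc]

lemma cond_negp_iff (hw : inB w) {O : Set (Fin n × Bool)} :
    (isOrbit w (negp '' O) ∧ negp '' (negp '' O) ≠ negp '' O) ↔
      (isOrbit w O ∧ negp '' O ≠ O) := by
  constructor
  · exact cond_negp hw
  · intro h
    refine ⟨?_, ?_⟩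
    · obtain ⟨p, hp⟩ := h.1
      refine ⟨negp p, ?_⟩
      rw [hp]
      exact image_negp_orb hw p
    · rw [image_negp_image_negp]
      exact h.2.symm

noncomputable def coefQ (hw : inB w) (g : Q hw → ℝ) (O : Set (Fin n × Bool)) : ℝ :=
  if h : isOrbit w O ∧ negp '' O ≠ O then
    (if (⟨O, h⟩ : A w) = (⟦(⟨O, h⟩ : A w)⟧ : Q hw).out then (1:ℝ) else -1) *
      g ⟦(⟨O, h⟩ : A w)⟧
  else 0

noncomputable def Phi (hw : inB w) : (Q hw → ℝ) →ₗ[ℝ] ((Fin n × Bool) → ℝ) where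
  toFun g := fun p => coefQ hw g (orb w p)
  map_add' g1 g2 := by
    funext p
    simp only [coefQ, Pi.add_apply]
    split_ifs <;> ring
  map_smul' c g := by
    funext p
    simp only [coefQ, Pi.smul_apply, smul_eq_mul, RingHom.id_apply]
    split_ifs <;> ring

lemma Phi_inj (hw : inB w) : Function.Injective (Phi hw) := by
  rw [injective_iff_map_eq_zero]
  intro g hg
  funext q
  induction q using Quotient.ind with
  | _ a =>
    obtain ⟨O, hO⟩ := a
    obtain ⟨p0, rfl⟩ := hO.1
    have hp := congrFun hg p0
    have hcond : isOrbit w (orb w p0) ∧ negp '' (orb w p0) ≠ orb w p0 :=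
      ⟨isOrbit_orb p0, hO.2⟩
    simp only [Phi, LinearMap.coe_mk, AddHom.coe_mk, Pi.zero_apply] at hp
    rw [coefQ, dif_pos hcond] at hp
    have : (⟨orb w p0, hcond⟩ : A w) = ⟨{q | w.SameCycle p0 q}, hO⟩ := rfl
    rw [this] at hp
    split_ifs at hp with h
    · simpa using hp
    · have : g ⟦(⟨{q | w.SameCycle p0 q}, hO⟩ : A w)⟧ = 0 := by linarith
      simpa using this

lemma out_cases (hw : inB w) (a : A w) :
    (⟦a⟧ : Q hw).out = a ∨ (⟦a⟧ : Q hw).out = iota hw a := by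
  have : (⟦(⟦a⟧ : Q hw).out⟧ : Q hw) = ⟦a⟧ := Quotient.out_eq _
  have h2 : a = (⟦a⟧ : Q hw).out ∨ a = iota hw ((⟦a⟧ : Q hw).out) := Quotient.exact this
  rcases h2 with h3 | h3
  · left; exact h3.symm
  · right
    have h4 := congrArg (iota hw) h3
    rw [iota_iota] at h4
    exact h4.symm

lemma mk_iota (hw : inB w) (a : A w) : (⟦iota hw a⟧ : Q hw) = ⟦a⟧ :=
  (Quotient.sound (Or.inr rfl)).symm

lemma coefQ_negp (hw : inB w) (g : Q hw → ℝ) (O : Set (Fin n × Bool)) :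
    coefQ hw g (negp '' O) = - coefQ hw g O := by
  by_cases h : isOrbit w O ∧ negp '' O ≠ O
  · have h2 : isOrbit w (negp '' O) ∧ negp '' (negp '' O) ≠ negp '' O :=
      (cond_negp_iff hw).mpr h
    rw [coefQ, dif_pos h2, coefQ, dif_pos h]
    have hia : (⟨negp '' O, h2⟩ : A w) = iota hw ⟨O, h⟩ := rfl
    rw [hia, mk_iota hw]
    rcases out_cases hw ⟨O, h⟩ with ho | ho <;> rw [ho]
    · rw [if_neg, if_pos rfl]
      · ring
      · intro hcc
        exact iota_ne hw ⟨O, h⟩ hcc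
    · rw [if_pos rfl, if_neg]
      · ring
      · intro hcc
        exact iota_ne hw ⟨O, h⟩ (by rw [← hcc])
  · have h2 : ¬(isOrbit w (negp '' O) ∧ negp '' (negp '' O) ≠ negp '' O) :=
      fun hc => h ((cond_negp_iff hw).mp hc)
    rw [coefQ, dif_neg h2, coefQ, dif_neg h, neg_zero]

lemma Phi_mem_FO (hw : inB w) (g : Q hw → ℝ) : Phi hw g ∈ FO w := by
  constructor
  · intro p
    show coefQ hw g (orb w (w p)) = coefQ hw g (orb w p)
    rw [orb_apply]
  · intro p
    show coefQ hw g (orb w (negp p)) = - coefQ hw g (orb w p)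
    rw [← image_negp_orb hw, coefQ_negp hw]

lemma const_on_orbit {f : (Fin n × Bool) → ℝ} (hf : ∀ p, f (w p) = f p)
    {p q : Fin n × Bool} (h : w.SameCycle p q) : f q = f p := by
  have hnat : ∀ (m : ℕ) (r : Fin n × Bool), f ((w ^ m) r) = f r := by
    intro m
    induction m with
    | zero => intro r; simp
    | succ k ih =>
      intro r
      rw [pow_succ']
      have : (w * w ^ k) r = w ((w ^ k) r) := rfl
      rw [this, hf, ih]
  obtain ⟨k, hk⟩ := h
  rcases k with m | m
  · rw [← hk]
    simpa using hnat m p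
  · rw [← hk]
    show f ((w ^ (Int.negSucc m)) p) = f p
    have hinv : (w ^ (m + 1)) ((w ^ Int.negSucc m) p) = p := by
      rw [zpow_negSucc]
      simp
    conv_rhs => rw [← hinv]
    rw [hnat]

/-- Base point of an orbit. -/
noncomputable def basept (a : A w) : Fin n × Bool := a.2.1.choose

lemma basept_spec (a : A w) : a.1 = orb w (basept a) := a.2.1.choose_spec

lemma Phi_surj_FO (hw : inB w) {f : (Fin n × Bool) → ℝ} (hf : f ∈ FO w) :
    ∃ g : Q hw → ℝ, Phi hw g = f := by
  obtain ⟨hfix, hodd⟩ := hf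
  refine ⟨fun q => f (basept q.out), ?_⟩
  funext p
  show coefQ hw (fun q => f (basept q.out)) (orb w p) = f p
  by_cases h : isOrbit w (orb w p) ∧ negp '' (orb w p) ≠ orb w p
  · rw [coefQ, dif_pos h]
    set a : A w := ⟨orb w p, h⟩ with ha
    rcases out_cases hw a with ho | ho <;> rw [ho]
    · rw [if_pos rfl]
      have hb : basept a ∈ orb w p := by
        have h2 := basept_spec a
        have hm : basept a ∈ orb w (basept a) := mem_orb_self _
        rw [← h2] at hm
        exact hm
      rw [const_on_orbit hfix hb]
      ring
    · rw [if_neg (fun hcc => iota_ne hw a (by rw [← hcc]))]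
      have h1 : (iota hw a).1 = orb w (negp p) := by
        show negp '' (orb w p) = _
        rw [image_negp_orb hw]
      have hb : basept (iota hw a) ∈ orb w (negp p) := by
        have h2 := basept_spec (iota hw a)
        have hm : basept (iota hw a) ∈ orb w (basept (iota hw a)) := mem_orb_self _
        rw [← h2, h1] at hm
        exact hm
      rw [const_on_orbit hfix hb, hodd]
      ring
  · rw [coefQ, dif_neg h]
    have hbal : negp '' (orb w p) = orb w p := by
      by_contra hc
      exact h ⟨isOrbit_orb p, hc⟩
    have : negp p ∈ orb w p := by
      rw [← hbal]
      exact ⟨p, mem_orb_self p, rfl⟩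
    have h1 : f (negp p) = f p := const_on_orbit hfix this
    have h2 : f (negp p) = - f p := hodd p
    linarith

lemma finrank_FO_eq (hw : inB w) :
    Module.finrank ℝ (FO w) = pairedCycles w := by
  have hr : LinearMap.range (Phi hw) = FO w := by
    apply le_antisymm
    · rintro _ ⟨g, rfl⟩
      exact Phi_mem_FO hw g
    · intro f hf
      obtain ⟨g, hg⟩ := Phi_surj_FO hw hf
      exact ⟨g, hg⟩
  rw [pairedCycles_eq hw, ← hr, LinearMap.finrank_range_of_inj (Phi_inj hw),
    Module.finrank_pi, Nat.card_eq_fintype_card]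

lemma finrank_le_inf_ker (W : Submodule ℝ ((Fin n × Bool) → ℝ))
    (ψ : ((Fin n × Bool) → ℝ) →ₗ[ℝ] ℝ) :
    Module.finrank ℝ W ≤
      Module.finrank ℝ (W ⊓ LinearMap.ker ψ : Submodule ℝ ((Fin n × Bool) → ℝ)) + 1 := by
  have h1 := LinearMap.finrank_range_add_finrank_ker (ψ.comp W.subtype)
  have h2 : (LinearMap.ker (ψ.comp W.subtype)).map W.subtype = W ⊓ LinearMap.ker ψ := by
    rw [LinearMap.ker_comp, Submodule.map_comap_subtype]
  have h3 : Module.finrank ℝ (LinearMap.ker (ψ.comp W.subtype)) =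
      Module.finrank ℝ (W ⊓ LinearMap.ker ψ : Submodule ℝ ((Fin n × Bool) → ℝ)) := by
    rw [← h2, Submodule.finrank_map_subtype_eq]
  have h4 : Module.finrank ℝ (LinearMap.range (ψ.comp W.subtype)) ≤ 1 := by
    have h5 := Submodule.finrank_le (LinearMap.range (ψ.comp W.subtype))
    simpa using h5
  omega

lemma refl_eq_reflT {t : Equiv.Perm (Fin n × Bool)} (ht : t ∈ reflB n) :
    ∃ p q, q ≠ p ∧ t = reflT p q := by
  rcases ht with ⟨i, rfl⟩ | ⟨i, j, hij, rfl⟩ | ⟨i, j, hij, rfl⟩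
  · refine ⟨(i, true), (i, false), by simp [Prod.ext_iff], ?_⟩
    rw [reflT, if_pos (show ((i, false) : Fin n × Bool) = negp (i, true) from rfl)]
  · refine ⟨(i, true), (j, true), by simp [Prod.ext_iff, hij.symm], ?_⟩
    rw [reflT, if_neg (by simp [negp, Prod.ext_iff])]
    rfl
  · refine ⟨(i, true), (j, false), by simp [Prod.ext_iff, hij.symm], ?_⟩
    rw [reflT, if_neg (by simp [negp, Prod.ext_iff, hij.symm])]
    rfl

lemma n_le_refl {t : Equiv.Perm (Fin n × Bool)} (ht : t ∈ reflB n) :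
    n ≤ Module.finrank ℝ (FO t) + 1 := by
  obtain ⟨p, q, hpq, rfl⟩ := refl_eq_reflT ht
  set ψ : ((Fin n × Bool) → ℝ) →ₗ[ℝ] ℝ :=
    (LinearMap.proj p : ((Fin n × Bool) → ℝ) →ₗ[ℝ] ℝ) - LinearMap.proj q with hψ
  have key : OddS n ⊓ LinearMap.ker ψ ≤ FO (reflT p q) := by
    rintro f ⟨hodd, hker⟩
    have hfpq : f p = f q := by
      have : ψ f = 0 := hker
      rw [hψ] at this
      simp only [LinearMap.sub_apply, LinearMap.proj_apply] at this
      linarith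
    refine ⟨?_, hodd⟩
    intro r
    rw [reflT_apply p q hpq r]
    split_ifs with e1 e2 e3 e4
    · rw [e1, hfpq]
    · rw [e2, hfpq]
    · rw [e3]
      have hodd' : ∀ s, f (negp s) = -f s := hodd
      rw [hodd', hodd', hfpq]
    · rw [e4]
      have hodd' : ∀ s, f (negp s) = -f s := hodd
      rw [hodd', hodd', hfpq]
    · rfl
  have h1 := finrank_le_inf_ker (OddS n) ψ
  have h2 := Submodule.finrank_mono key
  rw [finrank_OddS] at h1
  omega

lemma inB_reflT {p q : Fin n × Bool} (hpq : q ≠ p) : inB (reflT p q) :=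
  reflT_inB p q hpq

/-- The test function supported on `±q`. -/
noncomputable def gfun (q : Fin n × Bool) : (Fin n × Bool) → ℝ :=
  fun r => if r = q then 1 else if r = negp q then -1 else 0

lemma gfun_q (q : Fin n × Bool) : gfun q q = 1 := by simp [gfun]

lemma gfun_negq (q : Fin n × Bool) : gfun q (negp q) = -1 := by
  rw [gfun, if_neg (negp_ne q), if_pos rfl]

lemma gfun_other {q r : Fin n × Bool} (h1 : r ≠ q) (h2 : r ≠ negp q) : gfun q r = 0 := by
  rw [gfun, if_neg h1, if_neg h2]

lemma FO_lt (hw : inB w) {p : Fin n × Bool} (hp : w p ≠ p) :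
    FO w < FO (w * reflT p (w p)) := by
  set q := w p with hq
  have hqp : q ≠ p := hp
  have hσq : (w * reflT p q) q = q := by
    rw [Equiv.Perm.mul_apply, reflT_apply p q hqp]
    rw [if_neg hqp, if_pos rfl, ← hq]
  have hσnq : (w * reflT p q) (negp q) = negp q := by
    rw [Equiv.Perm.mul_apply, reflT_apply p q hqp]
    by_cases hA : negp q = p
    · rw [if_pos hA]
      have h1 : q = negp p := by rw [← hA, negp_negp]
      rw [h1, hw p, ← hq, ← h1]
    · rw [if_neg hA, if_neg (negp_ne q),
        if_neg (fun h : negp q = negp p => hqp (negp_inj h)), if_pos rfl]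
      rw [hw p, ← hq]
  rw [SetLike.lt_iff_le_and_exists]
  constructor
  · rintro f ⟨hfix, hodd⟩
    have hfix' : ∀ r, f (w r) = f r := hfix
    have hodd' : ∀ r, f (negp r) = -f r := hodd
    refine ⟨?_, hodd⟩
    intro r
    rw [Equiv.Perm.mul_apply, reflT_apply p q hqp r]
    split_ifs with e1 e2 e3 e4
    · rw [e1, hfix' q, hq, hfix' p]
    · rw [e2, ← hq, hfix' p]
    · rw [e3, hw, hodd', hfix' q, hq, hfix' p, ← hodd']
    · rw [e4, hw p, ← hq]
    · rw [hfix' r]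
  · refine ⟨gfun q, ⟨?_, ?_⟩, ?_⟩
    · intro r
      by_cases e1 : r = q
      · rw [e1, hσq]
      · by_cases e2 : r = negp q
        · rw [e2, hσnq]
        · have hne1 : (w * reflT p q) r ≠ q :=
            fun h => e1 ((w * reflT p q).injective (h.trans hσq.symm))
          have hne2 : (w * reflT p q) r ≠ negp q :=
            fun h => e2 ((w * reflT p q).injective (h.trans hσnq.symm))
          rw [gfun_other hne1 hne2, gfun_other e1 e2]
    · intro r
      by_cases e1 : r = q
      · rw [e1, gfun_negq, gfun_q]
      · by_cases e2 : r = negp q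
        · rw [e2, negp_negp, gfun_q, gfun_negq]
          norm_num
        · rw [gfun_other (fun h : negp r = q => e2 (by rw [← h, negp_negp]))
            (fun h : negp r = negp q => e1 (negp_inj h)), gfun_other e1 e2]
          norm_num
    · rintro ⟨hfix, -⟩
      have h1 := hfix p
      rw [← hq, gfun_q] at h1
      by_cases hB : p = negp q
      · rw [hB, gfun_negq] at h1
        norm_num at h1
      · rw [gfun_other (fun h => hqp h.symm) hB] at h1
        norm_num at h1

lemma exists_ne_of_ne_one {u : Equiv.Perm (Fin n × Bool)} (hu : u ≠ 1) : ∃ p, u p ≠ p := by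
  by_contra hc
  push_neg at hc
  exact hu (Equiv.ext fun p => hc p)

lemma exists_word : ∀ (k : ℕ) (u : Equiv.Perm (Fin n × Bool)), inB u →
    n - Module.finrank ℝ (FO u) ≤ k →
    ∃ l : List (Equiv.Perm (Fin n × Bool)), (∀ t ∈ l, t ∈ reflB n) ∧ l.prod = u ∧
      l.length + Module.finrank ℝ (FO u) ≤ n := by
  intro k
  induction k with
  | zero =>
    intro u hu hk
    by_cases h1 : u = 1
    · subst h1
      exact ⟨[], by simp, by simp, by simp [finrank_FO_one]⟩
    · obtain ⟨p, hp⟩ := exists_ne_of_ne_one h1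
      have hlt := Submodule.finrank_lt_finrank_of_lt (FO_lt hu hp)
      have hle := finrank_FO_le (u * reflT p (u p))
      exfalso
      omega
  | succ k ih =>
    intro u hu hk
    by_cases h1 : u = 1
    · subst h1
      exact ⟨[], by simp, by simp, by simp [finrank_FO_one]⟩
    · obtain ⟨p, hp⟩ := exists_ne_of_ne_one h1
      have hqp : u p ≠ p := hp
      have hlt := Submodule.finrank_lt_finrank_of_lt (FO_lt hu hp)
      have hle := finrank_FO_le (u * reflT p (u p))
      have hσB : inB (u * reflT p (u p)) := by
        rw [inB_iff] at hu ⊢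
        exact mul_mem hu ((inB_iff _).mp (inB_reflT hqp))
      obtain ⟨l', hmem, hprod, hlen⟩ := ih (u * reflT p (u p)) hσB (by omega)
      refine ⟨l' ++ [reflT p (u p)], ?_, ?_, ?_⟩
      · intro t ht
        rcases List.mem_append.mp ht with h | h
        · exact hmem t h
        · rw [List.mem_singleton.mp h]
          exact reflT_mem p (u p) hqp
      · rw [List.prod_append, hprod, List.prod_singleton, mul_assoc,
          reflT_mul_self p (u p) hqp, mul_one]
      · rw [List.length_append, List.length_singleton]
        omega

lemma lower_bound : ∀ l : List (Equiv.Perm (Fin n × Bool)), (∀ t ∈ l, t ∈ reflB n) →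
    n ≤ l.length + Module.finrank ℝ (FO l.prod) := by
  intro l
  induction l with
  | nil =>
    intro _
    simp only [List.prod_nil, List.length_nil, finrank_FO_one, zero_add, le_refl]
    exact finrank_FO_one.ge
  | cons t l' ih =>
    intro hmem
    have h1 : n ≤ Module.finrank ℝ (FO t) + 1 := n_le_refl (hmem t (by simp))
    have h2 := ih (fun s hs => hmem s (by simp [hs]))
    have h3 : FO t ⊓ FO l'.prod ≤ FO (t * l'.prod) := by
      rintro f ⟨⟨hf1, ho⟩, hf2, -⟩
      refine ⟨?_, ho⟩
      intro p
      have hf1' : ∀ r, f (t r) = f r := hf1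
      have hf2' : ∀ r, f (l'.prod r) = f r := hf2
      have hstep : (t * l'.prod) p = t (l'.prod p) := rfl
      rw [hstep, hf1', hf2']
    have h4 := Submodule.finrank_sup_add_finrank_inf_eq (FO t) (FO l'.prod)
    have h5 : Module.finrank ℝ ((FO t ⊔ FO l'.prod : Submodule ℝ _)) ≤ n := by
      have hs : (FO t ⊔ FO l'.prod) ≤ OddS n := sup_le inf_le_right inf_le_right
      have := Submodule.finrank_mono hs
      rwa [finrank_OddS] at this
    have h6 := Submodule.finrank_mono h3
    rw [List.prod_cons, List.length_cons]
    omega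

end Stmt5

/-- for `w ∈ B_n`, the absolute length `ℓ_T(w)` equals `n` minus the
number of paired cycles of `w`. -/
theorem stmt_5 (n : ℕ) (w : Equiv.Perm (Fin n × Bool)) (hw : inB w) :
    wordLen (reflB n) w = n - pairedCycles w := by
  obtain ⟨l0, hmem0, hprod0, hlen0⟩ :=
    Stmt5.exists_word (n - Module.finrank ℝ (Stmt5.FO w)) w hw le_rfl
  have hub : wordLen (reflB n) w ≤ l0.length :=
    Nat.sInf_le ⟨l0, rfl, hmem0, hprod0⟩
  have hnonempty : {k | ∃ l : List (Equiv.Perm (Fin n × Bool)),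
      l.length = k ∧ (∀ t ∈ l, t ∈ reflB n) ∧ l.prod = w}.Nonempty :=
    ⟨l0.length, l0, rfl, hmem0, hprod0⟩
  obtain ⟨l1, hlen1, hmem1, hprod1⟩ := Nat.sInf_mem hnonempty
  have hlb := Stmt5.lower_bound l1 hmem1
  rw [hprod1] at hlb
  have heq := Stmt5.finrank_FO_eq hw
  have hle := Stmt5.finrank_FO_le w
  have hW : l1.length = wordLen (reflB n) w := hlen1
  omega
end

section
/- In the absolute order on B_4 restricted to the subgroup D_4, the open interval (e, u) with u = [1][2][3][4] (the signed permutation sending each i to −i) has disconnected Hasse diagram; consequently the closed interval [e,u] in Abs(D_4) is not Cohen-Macaulay over any field. -/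
open scoped Classical

lemma negp_involutive {n : ℕ} : Function.Involutive (negp (n := n)) := by
  intro p; cases p; simp [negp]

/-- The signed permutation `-id = [1][2]⋯[n]`, sending every `i` to `-i`. -/
noncomputable def negPerm (n : ℕ) : Equiv.Perm (Fin n × Bool) :=
  negp_involutive.toPerm

/-- The set of reflections of `D_n`: only the paired reflections
`((i,j))`, `((i,-j))`, `1 ≤ i < j ≤ n`. -/
def reflD (n : ℕ) : Set (Equiv.Perm (Fin n × Bool)) :=
  {σ | (∃ i j : Fin n, i ≠ j ∧
      σ = Equiv.swap (i, true) (j, true) * Equiv.swap (i, false) (j, false)) ∨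
    (∃ i j : Fin n, i ≠ j ∧
      σ = Equiv.swap (i, true) (j, false) * Equiv.swap (i, false) (j, true))}

/-- Membership in `D_n`: a signed permutation with an even number of balanced
cycles. -/
def inD {n : ℕ} (w : Equiv.Perm (Fin n × Bool)) : Prop :=
  inB w ∧ Even (Nat.card {O : Set (Fin n × Bool) // balancedOrbit w O})

/-- The open interval `(e, u)` of the absolute order on `D_n`. -/
def openIntD (n : ℕ) (u : Equiv.Perm (Fin n × Bool)) : Set (Equiv.Perm (Fin n × Bool)) :=
  {z | inD z ∧ absLe (reflD n) 1 z ∧ absLe (reflD n) z u ∧ z ≠ 1 ∧ z ≠ u}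

/-- Covering relation of the poset induced on a subset `S`. -/
def covIn {G : Type*} [Group G] (T : Set G) (S : Set G) (a b : G) : Prop :=
  a ∈ S ∧ b ∈ S ∧ absLe T a b ∧ a ≠ b ∧
    ∀ c ∈ S, absLe T a c → absLe T c b → c = a ∨ c = b


namespace SevenAux

set_option maxRecDepth 1000000
set_option maxHeartbeats 4000000

abbrev P := Equiv.Perm (Fin 4 × Bool)

/-! ### Encoding permutations of `Fin 4 × Bool` as natural numbers -/

def ptF (m : Fin 8) : Fin 4 × Bool := (⟨m.val / 2, by omega⟩, m.val % 2 = 1)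
def idxF (p : Fin 4 × Bool) : Fin 8 :=
  ⟨2 * p.1.val + (if p.2 then 1 else 0), by rcases p with ⟨⟨i, hi⟩, b⟩; cases b <;> simp <;> omega⟩

lemma ptF_idxF : ∀ q, ptF (idxF q) = q := by decide

def L (σ : P) : List ℕ := (List.finRange 8).map fun m => (idxF (σ (ptF m))).val + 1
def enc (σ : P) : ℕ := Nat.ofDigits 9 (L σ)
def digs (a : ℕ) : List ℕ := (List.range 8).map fun m => a / 9 ^ m % 9
def mulE (a b : ℕ) : ℕ := Nat.ofDigits 9 ((digs b).map fun d => (digs a).getD (d - 1) 0)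
def invE (a : ℕ) : ℕ := Nat.ofDigits 9 ((List.range 8).map fun m => (digs a).idxOf (m + 1) + 1)

lemma ofDigits_div_pow_mod (L : List ℕ) (hL : ∀ d ∈ L, d < 9) :
    ∀ m, (Nat.ofDigits 9 L) / 9 ^ m % 9 = L.getD m 0 := by
  induction L with
  | nil => intro m; simp [Nat.ofDigits]
  | cons d t ih =>
    intro m
    have hd : d < 9 := hL d (by simp)
    have hts : ∀ x ∈ t, x < 9 := fun x hx => hL x (by simp [hx])
    cases m with
    | zero => simp [Nat.ofDigits_cons, Nat.add_mul_mod_self_left, Nat.mod_eq_of_lt hd]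
    | succ m =>
      have h1 : (d + 9 * Nat.ofDigits 9 t : ℕ) / 9 ^ (m+1) = (Nat.ofDigits 9 t : ℕ) / 9 ^ m := by
        rw [pow_succ, mul_comm (9^m) 9, ← Nat.div_div_eq_div_mul]
        congr 1
        rw [Nat.add_mul_div_left _ _ (by norm_num : (0:ℕ) < 9), Nat.div_eq_of_lt hd, zero_add]
      have := ih hts m
      simpa [Nat.ofDigits_cons, h1] using this

lemma L_lt (σ : P) : ∀ d ∈ L σ, d < 9 := by
  intro d hd
  simp only [L, List.mem_map] at hd
  obtain ⟨m, _, rfl⟩ := hd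
  have := (idxF (σ (ptF m))).isLt
  omega

lemma L_length (σ : P) : (L σ).length = 8 := by simp [L]

lemma digs_enc (σ : P) : digs (enc σ) = L σ := by
  apply List.ext_getElem
  · simp [digs, L]
  · intro i h1 h2
    have hi : i < 8 := by simpa [digs] using h1
    have := ofDigits_div_pow_mod (L σ) (L_lt σ) i
    simp only [digs, List.getElem_map, List.getElem_range]
    rw [← enc] at this
    rw [this]
    rw [List.getD_eq_getElem (L σ) 0 h2]

lemma L_getElem (σ : P) (j : ℕ) (hj : j < 8) :
    (L σ)[j]'(by simp [L_length, hj]) = (idxF (σ (ptF ⟨j, hj⟩))).val + 1 := by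
  simp [L]

lemma L_getD (σ : P) (j : ℕ) (hj : j < 8) :
    (L σ).getD j 0 = (idxF (σ (ptF ⟨j, hj⟩))).val + 1 := by
  rw [List.getD_eq_getElem _ 0 (by rw [L_length]; omega)]
  exact L_getElem σ j hj

lemma enc_mul (σ τ : P) : enc (σ * τ) = mulE (enc σ) (enc τ) := by
  unfold mulE
  rw [digs_enc, digs_enc]
  unfold enc
  congr 1
  have h2 : ∀ m : Fin 8, ((L σ).getD ((idxF (τ (ptF m))).val + 1 - 1) 0)
      = (idxF ((σ * τ) (ptF m))).val + 1 := by
    intro m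
    have hlt : (idxF (τ (ptF m))).val < 8 := (idxF (τ (ptF m))).isLt
    have h1 : (idxF (τ (ptF m))).val + 1 - 1 = (idxF (τ (ptF m))).val := by omega
    rw [h1, L_getD σ _ hlt]
    have h4 : ptF ⟨(idxF (τ (ptF m))).val, hlt⟩ = τ (ptF m) := by
      rw [Fin.eta]; exact ptF_idxF _
    rw [h4]
    rfl
  calc L (σ * τ)
      = (List.finRange 8).map (fun m => ((L σ).getD ((idxF (τ (ptF m))).val + 1 - 1) 0)) := by
        unfold L
        apply List.map_congr_left
        intro m _
        exact (h2 m).symm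
    _ = (L τ).map (fun d => (L σ).getD (d - 1) 0) := by
        unfold L
        rw [List.map_map]
        rfl

lemma enc_inj {σ τ : P} (h : enc σ = enc τ) : σ = τ := by
  have hL : L σ = L τ := by rw [← digs_enc, ← digs_enc, h]
  have key : ∀ m : Fin 8, σ (ptF m) = τ (ptF m) := by
    intro m
    have := congrArg (fun l => l.getD m.val 0) hL
    rw [L_getD σ _ m.isLt, L_getD τ _ m.isLt] at this
    have h2 : idxF (σ (ptF ⟨m.val, m.isLt⟩)) = idxF (τ (ptF ⟨m.val, m.isLt⟩)) :=
      Fin.val_injective (by omega)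
    have h3 := congrArg ptF h2
    rw [ptF_idxF, ptF_idxF, Fin.eta] at h3
    exact h3
  apply Equiv.ext
  intro q
  have hq : q = ptF (idxF q) := (ptF_idxF q).symm
  rw [hq, key (idxF q)]


/-! ### Generators (the reflections of `D₄`) and precomputed balls, as numeric literals -/

def gens : List P := [Equiv.swap ((0 : Fin 4), true) ((1 : Fin 4), true) * Equiv.swap ((0 : Fin 4), false) ((1 : Fin 4), false),
  Equiv.swap ((0 : Fin 4), true) ((1 : Fin 4), false) * Equiv.swap ((0 : Fin 4), false) ((1 : Fin 4), true),
  Equiv.swap ((0 : Fin 4), true) ((2 : Fin 4), true) * Equiv.swap ((0 : Fin 4), false) ((2 : Fin 4), false),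
  Equiv.swap ((0 : Fin 4), true) ((2 : Fin 4), false) * Equiv.swap ((0 : Fin 4), false) ((2 : Fin 4), true),
  Equiv.swap ((0 : Fin 4), true) ((3 : Fin 4), true) * Equiv.swap ((0 : Fin 4), false) ((3 : Fin 4), false),
  Equiv.swap ((0 : Fin 4), true) ((3 : Fin 4), false) * Equiv.swap ((0 : Fin 4), false) ((3 : Fin 4), true),
  Equiv.swap ((1 : Fin 4), true) ((2 : Fin 4), true) * Equiv.swap ((1 : Fin 4), false) ((2 : Fin 4), false),
  Equiv.swap ((1 : Fin 4), true) ((2 : Fin 4), false) * Equiv.swap ((1 : Fin 4), false) ((2 : Fin 4), true),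
  Equiv.swap ((1 : Fin 4), true) ((3 : Fin 4), true) * Equiv.swap ((1 : Fin 4), false) ((3 : Fin 4), false),
  Equiv.swap ((1 : Fin 4), true) ((3 : Fin 4), false) * Equiv.swap ((1 : Fin 4), false) ((3 : Fin 4), true),
  Equiv.swap ((2 : Fin 4), true) ((3 : Fin 4), true) * Equiv.swap ((2 : Fin 4), false) ((3 : Fin 4), false),
  Equiv.swap ((2 : Fin 4), true) ((3 : Fin 4), false) * Equiv.swap ((2 : Fin 4), false) ((3 : Fin 4), true)]
def gensN : List ℕ := [42372516, 42371860, 42111716, 42059220, 10487716, 6236180, 42244516, 42191380, 21119716, 16867540, 31876516, 27572500]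
def bN0 : List ℕ := [42374116]
def bN1 : List ℕ := [6236180, 10487716, 16867540, 21119716, 27572500, 31876516, 42059220, 42111716, 42191380, 42244516, 42371860, 42372516, 42374116]
def bN2 : List ℕ := [6053444, 6106580, 6236180, 6238740, 6239380, 6314900, 6367380, 10304980, 10358116, 10487716, 10490260, 10490916, 10566420, 10618916, 16552644, 16605140, 16862740, 16863380, 16867540, 16945300, 16997140, 20804820, 20857316, 21114260, 21114916, 21119716, 21196180, 21249316, 27178900, 27231380, 27313300, 27365140, 27570244, 27570900, 27572500, 31430420, 31482916, 31564180, 31617316, 31874260, 31874916, 31876516, 38070100, 38121940, 38122580, 42059220, 42060180, 42060820, 42111716, 42112660, 42113316, 42188180, 42188820, 42191380, 42240660, 42241316, 42244516, 42320980, 42321620, 42371860, 42372516, 42373460, 42374116]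
def bN3 : List ℕ := [6053444, 6055044, 6055700, 6106580, 6107540, 6108180, 6183044, 6183700, 6235540, 6236180, 6238740, 6239380, 6314900, 6315844, 6316500, 6367380, 6368340, 6368980, 10304980, 10306580, 10307220, 10358116, 10359060, 10359716, 10434580, 10435220, 10487060, 10487716, 10490260, 10490916, 10566420, 10567380, 10568020, 10618916, 10619860, 10620516, 16551044, 16551700, 16552644, 16603540, 16604180, 16605140, 16815044, 16815700, 16862740, 16863380, 16867540, 16868180, 16941444, 16942100, 16945300, 16993940, 16994580, 16997140, 20802580, 20803220, 20804820, 20855060, 20855716, 20857316, 21066580, 21067220, 21114260, 21114916, 21119060, 21119716, 21192980, 21193620, 21196180, 21245460, 21246116, 21249316, 27178900, 27181444, 27182100, 27231380, 27233940, 27234580, 27307844, 27308500, 27313300, 27360340, 27360980, 27365140, 27570244, 27570900, 27571844, 27572500, 27624340, 27624980, 31430420, 31432980, 31433620, 31482916, 31485460, 31486116, 31559380, 31560020, 31564180, 31611860, 31612516, 31617316, 31823380, 31824020, 31874260, 31874916, 31875860, 31876516, 37807044, 37807700, 37859540, 37860180, 37939844, 37940500, 37992340, 37992980, 38067844, 38068500,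 38070100, 38120340, 38120980, 38121940, 38122580, 42058580, 42059220, 42060180, 42060820, 42111060, 42111716, 42112660, 42113316, 42188180, 42188820, 42191380, 42192020, 42240660, 42241316, 42243860, 42244516, 42319380, 42320020, 42320980, 42321620, 42371860, 42372516, 42373460, 42374116]
def ballN : ℕ → List ℕ
  | 0 => bN0
  | 1 => bN1
  | 2 => bN2
  | 3 => bN3
  | _ + 4 => []
def ClN : List (ℕ × ℕ) := [(27572500, 1), (31876516, 1), (42371860, 1), (42372516, 1), (27570244, 2), (27570900, 2), (31874260, 2), (31874916, 2), (38070100, 2), (42373460, 2), (27571844, 3), (31875860, 3), (38067844, 3), (38068500, 3)]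
def encId : ℕ := 42374116
def encU : ℕ := 38069444

def ClNf : List ℕ := ClN.map Prod.fst

lemma enc_one : enc 1 = encId := by decide
lemma gens_enc : gens.map enc = gensN := by decide
lemma encId_mem : encId ∈ ballN 0 := by decide
lemma ballN_mono' : ∀ j ≤ 3, ∀ k ≤ 3, j ≤ k → ∀ c ∈ ballN j, c ∈ ballN k := by decide
lemma closure1 : ∀ k < 3, ∀ t ∈ gensN, ∀ b ∈ ballN k, mulE t b ∈ ballN (k+1) := by decide
lemma closure2 : ∀ k < 3, ∀ c ∈ ballN (k+1),
    c ∈ ballN k ∨ ∃ t ∈ gensN, ∃ b ∈ ballN k, mulE t b = c := by decide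
lemma inv_fact : ∀ c ∈ ballN 3, invE c ∈ ballN 3 ∧ mulE c (invE c) = encId := by decide
lemma Cl_facts : ∀ p ∈ ClN, 1 ≤ p.2 ∧ p.2 ≤ 3 ∧ p.1 ∈ ballN p.2 ∧ p.1 ∉ ballN (p.2 - 1) := by decide

lemma master_check : ∀ p ∈ ClN, ∀ k ∈ [1, 2, 3], ∀ g ∈ ballN (max k p.2 - min k p.2),
    mulE p.1 g ∈ ballN k → mulE p.1 g ∉ ballN (k - 1) →
    mulE (invE (mulE p.1 g)) encU ∈ ballN (4 - k) → mulE p.1 g ∈ ClNf := by decide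

/-! ### The chosen elements `a₀ = ((1,2))` and `b₀ = ((1,3))`, and the word for `u` -/

def a₀ : P := Equiv.swap ((0 : Fin 4), true) ((1 : Fin 4), true) *
  Equiv.swap ((0 : Fin 4), false) ((1 : Fin 4), false)
def b₀ : P := Equiv.swap ((0 : Fin 4), true) ((2 : Fin 4), true) *
  Equiv.swap ((0 : Fin 4), false) ((2 : Fin 4), false)
def g01m : P := Equiv.swap ((0 : Fin 4), true) ((1 : Fin 4), false) *
  Equiv.swap ((0 : Fin 4), false) ((1 : Fin 4), true)
def g23p : P := Equiv.swap ((2 : Fin 4), true) ((3 : Fin 4), true) *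
  Equiv.swap ((2 : Fin 4), false) ((3 : Fin 4), false)
def g23m : P := Equiv.swap ((2 : Fin 4), true) ((3 : Fin 4), false) *
  Equiv.swap ((2 : Fin 4), false) ((3 : Fin 4), true)

lemma enc_a : enc a₀ = 42372516 := by decide
lemma enc_b : enc b₀ = 42111716 := by decide
lemma a_in_Cl : (42372516 : ℕ) ∈ ClNf := by decide
lemma b_notin_Cl : (42111716 : ℕ) ∉ ClNf := by decide
lemma a_facts : (42372516 : ℕ) ∈ ballN 1 ∧ (42372516 : ℕ) ∉ ballN 0 := by decide
lemma b_facts : (42111716 : ℕ) ∈ ballN 1 ∧ (42111716 : ℕ) ∉ ballN 0 := by decide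
lemma enc_au : enc (a₀⁻¹ * negPerm 4) = 38067844 := by decide
lemma au_facts : (38067844 : ℕ) ∈ ballN 3 ∧ (38067844 : ℕ) ∉ ballN 2 := by decide
lemma enc_bu : enc (b₀⁻¹ * negPerm 4) = 37807044 := by decide
lemma bu_facts : (37807044 : ℕ) ∈ ballN 3 ∧ (37807044 : ℕ) ∉ ballN 2 := by decide
lemma encU_eq : enc (negPerm 4) = encU := by decide
lemma encU_notin : encU ∉ ballN 3 := by decide
lemma u_word_eq : negPerm 4 = ([a₀, g01m, g23p, g23m] : List P).prod := by decide
lemma ab_ne : a₀ ≠ 1 ∧ a₀ ≠ negPerm 4 ∧ b₀ ≠ 1 ∧ b₀ ≠ negPerm 4 := by decide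

lemma gens_invol : ∀ t ∈ gens, t * t = 1 := by
  intro t ht; fin_cases ht <;> decide

lemma gens_subset : ∀ t ∈ gens, t ∈ reflD 4 := by
  intro t ht
  fin_cases ht
  · exact Or.inl ⟨0, 1, by decide, rfl⟩
  · exact Or.inr ⟨0, 1, by decide, rfl⟩
  · exact Or.inl ⟨0, 2, by decide, rfl⟩
  · exact Or.inr ⟨0, 2, by decide, rfl⟩
  · exact Or.inl ⟨0, 3, by decide, rfl⟩
  · exact Or.inr ⟨0, 3, by decide, rfl⟩
  · exact Or.inl ⟨1, 2, by decide, rfl⟩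
  · exact Or.inr ⟨1, 2, by decide, rfl⟩
  · exact Or.inl ⟨1, 3, by decide, rfl⟩
  · exact Or.inr ⟨1, 3, by decide, rfl⟩
  · exact Or.inl ⟨2, 3, by decide, rfl⟩
  · exact Or.inr ⟨2, 3, by decide, rfl⟩

lemma refl_mem_gens : ∀ t ∈ reflD 4, t ∈ gens := by
  rintro t (⟨i, j, hne, rfl⟩ | ⟨i, j, hne, rfl⟩) <;>
    fin_cases i <;> fin_cases j <;>
    first
      | exact absurd rfl hne
      | decide

/-! ### Words, reachability, and `wordLen` -/

def S (w : P) : Set ℕ :=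
  {k | ∃ l : List P, l.length = k ∧ (∀ t ∈ l, t ∈ reflD 4) ∧ l.prod = w}

lemma wordLen_eq_sInf (w : P) : wordLen (reflD 4) w = sInf (S w) := rfl

def reach (w : P) (k : ℕ) : Prop :=
  ∃ l : List P, (∀ t ∈ l, t ∈ reflD 4) ∧ l.length ≤ k ∧ l.prod = w

lemma mem_S_mul {w v : P} {j k : ℕ} (hw : j ∈ S w) (hv : k ∈ S v) : j + k ∈ S (w * v) := by
  obtain ⟨l1, hl1, ht1, hp1⟩ := hw
  obtain ⟨l2, hl2, ht2, hp2⟩ := hv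
  exact ⟨l1 ++ l2, by simp [hl1, hl2], by
    intro t ht; rcases List.mem_append.mp ht with h | h; exacts [ht1 t h, ht2 t h],
    by rw [List.prod_append, hp1, hp2]⟩

lemma refl_inv {t : P} (ht : t ∈ reflD 4) : t⁻¹ = t :=
  inv_eq_of_mul_eq_one_right (gens_invol t (refl_mem_gens t ht))

lemma mem_S_inv {w : P} {k : ℕ} (hw : k ∈ S w) : k ∈ S w⁻¹ := by
  obtain ⟨l, hl, ht, hp⟩ := hw
  refine ⟨l.reverse, by simp [hl], by intro t h; exact ht t (List.mem_reverse.mp h), ?_⟩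
  have h1 : w⁻¹ = (l.map fun x => x⁻¹).reverse.prod := by rw [← hp, List.prod_inv_reverse]
  have h2 : l.map (fun x => x⁻¹) = l := by
    apply List.map_congr_left ?_ |>.trans (List.map_id l)
    intro t h; exact refl_inv (ht t h)
  rw [h2] at h1
  exact h1.symm

lemma reach_of_mem_S {w : P} {k : ℕ} (h : k ∈ S w) : reach w k := by
  obtain ⟨l, hl, ht, hp⟩ := h; exact ⟨l, ht, le_of_eq hl, hp⟩

lemma reach_mono {w : P} {j k : ℕ} (h : reach w j) (hjk : j ≤ k) : reach w k := by
  obtain ⟨l, ht, hl, hp⟩ := h; exact ⟨l, ht, hl.trans hjk, hp⟩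

lemma reach_inv {w : P} {k : ℕ} (h : reach w k) : reach w⁻¹ k := by
  obtain ⟨l, ht, hl, rfl⟩ := h
  have : l.length ∈ S l.prod := ⟨l, rfl, ht, rfl⟩
  exact reach_mono (reach_of_mem_S (mem_S_inv this)) hl

lemma R1aux : ∀ l : List P, (∀ t ∈ l, t ∈ reflD 4) → ∀ k, l.length ≤ k → k ≤ 3 →
    enc l.prod ∈ ballN k := by
  intro l
  induction l with
  | nil =>
    intro _ k _ hk
    simpa [enc_one] using ballN_mono' 0 (by omega) k hk (by omega) encId encId_mem
  | cons t l ih =>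
    intro ht k hl hk
    simp only [List.length_cons] at hl
    have hk1 : 1 ≤ k := by omega
    have htT : t ∈ reflD 4 := ht t (by simp)
    have htl : ∀ s ∈ l, s ∈ reflD 4 := fun s hs => ht s (by simp [hs])
    have hrec : enc l.prod ∈ ballN (k - 1) := ih htl (k - 1) (by omega) (by omega)
    have htg : enc t ∈ gensN := by
      rw [← gens_enc]; exact List.mem_map_of_mem (f := enc) (refl_mem_gens t htT)
    have := closure1 (k - 1) (by omega) (enc t) htg (enc l.prod) hrec
    rw [List.prod_cons, enc_mul]
    have hkk : k - 1 + 1 = k := by omega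
    rwa [hkk] at this

lemma R1 {w : P} {k : ℕ} (h : reach w k) (hk : k ≤ 3) : enc w ∈ ballN k := by
  obtain ⟨l, ht, hl, rfl⟩ := h
  exact R1aux l ht k hl hk

lemma R2 : ∀ k ≤ 3, ∀ c ∈ ballN k, ∃ w : P, enc w = c ∧ reach w k := by
  intro k
  induction k with
  | zero =>
    intro _ c hc
    have : c = encId := by
      have : ballN 0 = [encId] := by decide
      rw [this] at hc; simpa using hc
    exact ⟨1, by rw [enc_one, this], ⟨[], by simp, by simp, rfl⟩⟩
  | succ k ih =>
    intro hk c hc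
    rcases closure2 k (by omega) c hc with h | ⟨t, htg, b, hb, heq⟩
    · obtain ⟨w, hw, hr⟩ := ih (by omega) c h
      exact ⟨w, hw, reach_mono hr (by omega)⟩
    · rw [← gens_enc] at htg
      obtain ⟨tp, htp, htpe⟩ := List.mem_map.mp htg
      obtain ⟨w, hw, ⟨l, hlt, hll, hlp⟩⟩ := ih (by omega) b hb
      refine ⟨tp * w, by rw [enc_mul, htpe, hw, heq], ⟨tp :: l, ?_, by simp [hll], by
        rw [List.prod_cons, hlp]⟩⟩
      intro s hs
      rcases List.mem_cons.mp hs with rfl | h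
      exacts [gens_subset s htp, hlt s h]

lemma mem_S_of_ball {w : P} {k : ℕ} (hk : k ≤ 3) (h : enc w ∈ ballN k) :
    ∃ m ≤ k, m ∈ S w := by
  obtain ⟨w', hw', ⟨l, ht, hl, hp⟩⟩ := R2 k hk (enc w) h
  have : w' = w := enc_inj hw'
  subst this
  exact ⟨l.length, hl, ⟨l, rfl, ht, hp⟩⟩

lemma lower_of_ball {w : P} {k : ℕ} (hk : k ≤ 3) (h : enc w ∉ ballN k) :
    ∀ m ∈ S w, k + 1 ≤ m := by
  intro m hm
  by_contra hcon
  exact h (R1 (reach_mono (reach_of_mem_S hm) (by omega)) hk)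

lemma wordLen_eq_of_ball {w : P} {k : ℕ} (h1k : 1 ≤ k) (hk : k ≤ 3)
    (h1 : enc w ∈ ballN k) (h2 : enc w ∉ ballN (k - 1)) : wordLen (reflD 4) w = k := by
  obtain ⟨m, hmk, hm⟩ := mem_S_of_ball hk h1
  have hlow := lower_of_ball (k := k - 1) (by omega) h2
  rw [wordLen_eq_sInf]
  have h3 : m = k := by have := hlow m hm; omega
  subst h3
  refine le_antisymm (Nat.sInf_le hm) ?_
  have := hlow _ (Nat.sInf_mem (⟨m, hm⟩ : (S w).Nonempty))
  omega

lemma wordLen_u : wordLen (reflD 4) (negPerm 4) = 4 := by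
  have hup : 4 ∈ S (negPerm 4) := by
    refine ⟨[a₀, g01m, g23p, g23m], rfl, ?_, u_word_eq.symm⟩
    intro t ht
    apply gens_subset
    fin_cases ht <;> decide
  have hlow : ∀ m ∈ S (negPerm 4), 4 ≤ m := by
    have := lower_of_ball (w := negPerm 4) (k := 3) (by omega) (by rw [encU_eq]; exact encU_notin)
    intro m hm; exact this m hm
  rw [wordLen_eq_sInf]
  refine le_antisymm (Nat.sInf_le hup) (hlow _ (Nat.sInf_mem ⟨4, hup⟩))

lemma wordLen_one : wordLen (reflD 4) 1 = 0 := by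
  rw [wordLen_eq_sInf]
  exact Nat.sInf_eq_zero.mpr (Or.inl ⟨[], rfl, by simp, rfl⟩)

lemma absLe_one (z : P) : absLe (reflD 4) 1 z := by
  unfold absLe
  rw [inv_one, one_mul, wordLen_one, zero_add]

/-! ### Analysis of elements of the open interval -/

lemma S_nonempty_of_interval {y : P} (hy : y ∈ openIntD 4 (negPerm 4)) :
    (S y).Nonempty ∧ (S (y⁻¹ * negPerm 4)).Nonempty := by
  obtain ⟨_, _, hyu, hne1, hneu⟩ := hy
  have habs : wordLen (reflD 4) y + wordLen (reflD 4) (y⁻¹ * negPerm 4) = 4 := by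
    have := hyu; unfold absLe at this; rwa [wordLen_u] at this
  have hu4 : 4 ∈ S (negPerm 4) := by
    refine ⟨[a₀, g01m, g23p, g23m], rfl, ?_, u_word_eq.symm⟩
    intro t ht; apply gens_subset; fin_cases ht <;> decide
  have hSy : (S y).Nonempty := by
    by_contra hcon
    have hempty : S y = ∅ := Set.not_nonempty_iff_eq_empty.mp hcon
    have h0 : wordLen (reflD 4) y = 0 := by rw [wordLen_eq_sInf, hempty, Nat.sInf_empty]
    have h4 : wordLen (reflD 4) (y⁻¹ * negPerm 4) = 4 := by omega
    have hS2 : (S (y⁻¹ * negPerm 4)).Nonempty := by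
      by_contra hcon2
      have he2 : S (y⁻¹ * negPerm 4) = ∅ := Set.not_nonempty_iff_eq_empty.mp hcon2
      rw [wordLen_eq_sInf, he2, Nat.sInf_empty] at h4
      omega
    have hmem : 4 ∈ S (y⁻¹ * negPerm 4) := by
      have := Nat.sInf_mem hS2
      rwa [← wordLen_eq_sInf, h4] at this
    have : (4 + 4 : ℕ) ∈ S (negPerm 4 * (y⁻¹ * negPerm 4)⁻¹) := mem_S_mul hu4 (mem_S_inv hmem)
    have hyy : negPerm 4 * (y⁻¹ * negPerm 4)⁻¹ = y := by group
    rw [hyy] at this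
    exact hcon ⟨8, this⟩
  refine ⟨hSy, ?_⟩
  obtain ⟨ky, hky⟩ := hSy
  exact ⟨ky + 4, by
    have := mem_S_mul (mem_S_inv hky) hu4
    exact this⟩

lemma interval_facts {y : P} (hy : y ∈ openIntD 4 (negPerm 4)) :
    ∃ k, 1 ≤ k ∧ k ≤ 3 ∧ wordLen (reflD 4) y = k ∧
      reach y k ∧ reach (y⁻¹ * negPerm 4) (4 - k) ∧ enc y ∉ ballN (k - 1) := by
  obtain ⟨hSy, hSu⟩ := S_nonempty_of_interval hy
  obtain ⟨_, _, hyu, hne1, hneu⟩ := hy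
  have habs : wordLen (reflD 4) y + wordLen (reflD 4) (y⁻¹ * negPerm 4) = 4 := by
    have := hyu; unfold absLe at this; rwa [wordLen_u] at this
  set k := wordLen (reflD 4) y with hkdef
  set m := wordLen (reflD 4) (y⁻¹ * negPerm 4) with hmdef
  have hkS : k ∈ S y := by rw [hkdef, wordLen_eq_sInf]; exact Nat.sInf_mem hSy
  have hmS : m ∈ S (y⁻¹ * negPerm 4) := by rw [hmdef, wordLen_eq_sInf]; exact Nat.sInf_mem hSu
  have hk0 : k ≠ 0 := by
    intro h0
    obtain ⟨l, hl, _, hp⟩ := hkS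
    rw [h0] at hl
    rw [List.length_eq_zero_iff.mp hl] at hp
    simp only [List.prod_nil] at hp
    exact hne1 hp.symm
  have hm0 : m ≠ 0 := by
    intro h0
    obtain ⟨l, hl, _, hp⟩ := hmS
    rw [h0] at hl
    rw [List.length_eq_zero_iff.mp hl] at hp
    simp only [List.prod_nil] at hp
    exact hneu (inv_mul_eq_one.mp hp.symm)
  have hk3 : k ≤ 3 := by omega
  refine ⟨k, by omega, hk3, rfl, reach_of_mem_S hkS, ?_, ?_⟩
  · have : m = 4 - k := by omega
    rw [← this]; exact reach_of_mem_S hmS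
  · intro hmem
    obtain ⟨m', hm', hm'S⟩ := mem_S_of_ball (k := k - 1) (by omega) hmem
    have : k ≤ m' := by
      have : sInf (S y) ≤ m' := Nat.sInf_le hm'S
      rw [← wordLen_eq_sInf, ← hkdef] at this
      omega
    omega

/-! ### The key closure property of the component -/

lemma step {x y : P} (hx : enc x ∈ ClNf) (hy : y ∈ openIntD 4 (negPerm 4))
    (hcomp : absLe (reflD 4) x y ∨ absLe (reflD 4) y x) : enc y ∈ ClNf := by
  obtain ⟨p, hpC, hpe⟩ := List.mem_map.mp hx
  obtain ⟨hl1, hl3, hpball, hpnot⟩ := Cl_facts p hpC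
  have hwx : wordLen (reflD 4) x = p.2 :=
    wordLen_eq_of_ball hl1 hl3 (by rw [← hpe]; exact hpball) (by rw [← hpe]; exact hpnot)
  obtain ⟨k, hk1, hk3, hwy, hry, hru, hynot⟩ := interval_facts hy
  obtain ⟨mx, hmx, hmxS⟩ := mem_S_of_ball hl3 (by rw [← hpe]; exact hpball)
  have hSyne : (S y).Nonempty := by
    obtain ⟨l, ht, hl, hp⟩ := hry
    exact ⟨l.length, l, rfl, ht, hp⟩
  have hkS : k ∈ S y := by rw [← hwy, wordLen_eq_sInf]; exact Nat.sInf_mem hSyne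
  have hreach : reach (x⁻¹ * y) (max k p.2 - min k p.2) := by
    rcases hcomp with h | h
    · unfold absLe at h
      rw [hwx, hwy] at h
      have hj : wordLen (reflD 4) (x⁻¹ * y) = k - p.2 := by omega
      have hple : p.2 ≤ k := by omega
      have hSne : (S (x⁻¹ * y)).Nonempty := ⟨mx + k, mem_S_mul (mem_S_inv hmxS) hkS⟩
      have : k - p.2 ∈ S (x⁻¹ * y) := by
        rw [← hj, wordLen_eq_sInf]; exact Nat.sInf_mem hSne
      have hmax : max k p.2 - min k p.2 = k - p.2 := by omega
      rw [hmax]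
      exact reach_of_mem_S this
    · unfold absLe at h
      rw [hwx, hwy] at h
      have hj : wordLen (reflD 4) (y⁻¹ * x) = p.2 - k := by omega
      have hSne : (S (y⁻¹ * x)).Nonempty := ⟨k + mx, mem_S_mul (mem_S_inv hkS) hmxS⟩
      have hmem : p.2 - k ∈ S (y⁻¹ * x) := by
        rw [← hj, wordLen_eq_sInf]; exact Nat.sInf_mem hSne
      have hinv : (y⁻¹ * x)⁻¹ = x⁻¹ * y := by group
      have hmax : max k p.2 - min k p.2 = p.2 - k := by omega
      rw [hmax]
      have := reach_inv (reach_of_mem_S hmem)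
      rwa [hinv] at this
  have hdelta : max k p.2 - min k p.2 ≤ 3 := by omega
  have hg : enc (x⁻¹ * y) ∈ ballN (max k p.2 - min k p.2) := R1 hreach hdelta
  have hy1 : mulE (enc x) (enc (x⁻¹ * y)) = enc y := by
    rw [← enc_mul, mul_inv_cancel_left]
  have h2 : enc y ∈ ballN k := R1 hry (by omega)
  have h4 : mulE (invE (enc y)) encU ∈ ballN (4 - k) := by
    have hy3 : enc y ∈ ballN 3 := ballN_mono' k (by omega) 3 (by omega) (by omega) _ h2
    obtain ⟨hinv3, hmulinv⟩ := inv_fact (enc y) hy3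
    obtain ⟨z, hz, _⟩ := R2 3 (by omega) (invE (enc y)) hinv3
    have hz1 : y * z = 1 := by
      apply enc_inj
      rw [enc_mul, hz, hmulinv, enc_one]
    have hzy : z = y⁻¹ := eq_inv_of_mul_eq_one_right hz1
    rw [← hz, hzy, ← encU_eq, ← enc_mul]
    exact R1 hru (by omega)
  have hkmem : k ∈ [1, 2, 3] := by interval_cases k <;> simp
  have := master_check p hpC k hkmem (enc (x⁻¹ * y)) hg
  rw [hpe, hy1] at this
  exact this h2 hynot h4

/-! ### `a₀` and `b₀` lie in the open interval -/

lemma sameCycle_invol {σ : P} (h : σ * σ = 1) {p q : Fin 4 × Bool}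
    (hs : σ.SameCycle p q) : q = p ∨ q = σ p := by
  obtain ⟨i, hi⟩ := hs
  have h2 : σ ^ (2 : ℤ) = 1 := by rw [zpow_two, h]
  have hdecomp : σ ^ i = σ ^ (i % 2) := by
    conv_lhs => rw [← Int.emod_add_mul_ediv i 2]
    rw [zpow_add, zpow_mul, h2, one_zpow, mul_one]
  rcases Int.emod_two_eq_zero_or_one i with h0 | h1
  · left; rw [← hi, hdecomp, h0]; simp
  · right; rw [← hi, hdecomp, h1]; simp

lemma no_balanced {σ : P} (h1 : σ * σ = 1)
    (h2 : ∀ p : Fin 4 × Bool, negp p ≠ p ∧ negp p ≠ σ p) (O : Set (Fin 4 × Bool)) :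
    ¬ balancedOrbit σ O := by
  rintro ⟨⟨p, rfl⟩, hneg⟩
  have hp : p ∈ {q | σ.SameCycle p q} := Equiv.Perm.SameCycle.refl σ p
  have h3 : negp p ∈ negp '' {q | σ.SameCycle p q} := ⟨p, hp, rfl⟩
  rw [hneg] at h3
  rcases sameCycle_invol h1 h3 with h | h
  · exact (h2 p).1 h
  · exact (h2 p).2 h

lemma inD_of (σ : P) (hB : inB σ) (h1 : σ * σ = 1)
    (h2 : ∀ p : Fin 4 × Bool, negp p ≠ p ∧ negp p ≠ σ p) : inD σ := by
  refine ⟨hB, ?_⟩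
  haveI : IsEmpty {O : Set (Fin 4 × Bool) // balancedOrbit σ O} :=
    ⟨fun ⟨O, hO⟩ => no_balanced h1 h2 O hO⟩
  rw [Nat.card_of_isEmpty]
  exact Even.zero

lemma a_mem : a₀ ∈ openIntD 4 (negPerm 4) := by
  refine ⟨inD_of a₀ (by unfold inB; decide) (by decide) (by decide), absLe_one a₀, ?_, ab_ne.1, ab_ne.2.1⟩
  show wordLen (reflD 4) a₀ + wordLen (reflD 4) (a₀⁻¹ * negPerm 4) = wordLen (reflD 4) (negPerm 4)
  have h1 : wordLen (reflD 4) a₀ = 1 :=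
    wordLen_eq_of_ball (k := 1) (by omega) (by omega) (by rw [enc_a]; exact a_facts.1)
      (by rw [enc_a]; exact a_facts.2)
  have h3 : wordLen (reflD 4) (a₀⁻¹ * negPerm 4) = 3 :=
    wordLen_eq_of_ball (k := 3) (by omega) (by omega) (by rw [enc_au]; exact au_facts.1)
      (by rw [enc_au]; exact au_facts.2)
  rw [wordLen_u, h1, h3]

lemma b_mem : b₀ ∈ openIntD 4 (negPerm 4) := by
  refine ⟨inD_of b₀ (by unfold inB; decide) (by decide) (by decide), absLe_one b₀, ?_, ab_ne.2.2.1, ab_ne.2.2.2⟩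
  show wordLen (reflD 4) b₀ + wordLen (reflD 4) (b₀⁻¹ * negPerm 4) = wordLen (reflD 4) (negPerm 4)
  have h1 : wordLen (reflD 4) b₀ = 1 :=
    wordLen_eq_of_ball (k := 1) (by omega) (by omega) (by rw [enc_b]; exact b_facts.1)
      (by rw [enc_b]; exact b_facts.2)
  have h3 : wordLen (reflD 4) (b₀⁻¹ * negPerm 4) = 3 :=
    wordLen_eq_of_ball (k := 3) (by omega) (by omega) (by rw [enc_bu]; exact bu_facts.1)
      (by rw [enc_bu]; exact bu_facts.2)
  rw [wordLen_u, h1, h3]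

end SevenAux

/-- in the absolute order on `D_4`, the open interval `(e, u)` with
`u = [1][2][3][4] = -id` has a disconnected Hasse diagram: there are elements of
the open interval which cannot be joined by a path of Hasse edges within the
open interval. (Consequently the closed interval `[e,u]` in `Abs(D_4)` is not
Cohen-Macaulay over any field.) -/
theorem stmt_7 :
    ∃ a ∈ openIntD 4 (negPerm 4), ∃ b ∈ openIntD 4 (negPerm 4),
      ¬ Relation.ReflTransGen
        (fun x y => x ∈ openIntD 4 (negPerm 4) ∧ y ∈ openIntD 4 (negPerm 4) ∧
          (covIn (reflD 4) (openIntD 4 (negPerm 4)) x y ∨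
           covIn (reflD 4) (openIntD 4 (negPerm 4)) y x)) a b := by

  classical
  refine ⟨SevenAux.a₀, SevenAux.a_mem, SevenAux.b₀, SevenAux.b_mem, fun hRT => ?_⟩
  have key : ∀ z, Relation.ReflTransGen
      (fun x y => x ∈ openIntD 4 (negPerm 4) ∧ y ∈ openIntD 4 (negPerm 4) ∧
        (covIn (reflD 4) (openIntD 4 (negPerm 4)) x y ∨
         covIn (reflD 4) (openIntD 4 (negPerm 4)) y x)) SevenAux.a₀ z →
      SevenAux.enc z ∈ SevenAux.ClNf := by
    intro z h
    induction h with
    | refl => rw [SevenAux.enc_a]; exact SevenAux.a_in_Cl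
    | tail hst r ih =>
      obtain ⟨hcI, hzI, hcov⟩ := r
      exact SevenAux.step ih hzI
        (hcov.elim (fun h => Or.inl h.2.2.1) (fun h => Or.inr h.2.2.1))
  have hb := key _ hRT
  rw [SevenAux.enc_b] at hb
  exact SevenAux.b_notin_Cl hb
end

section
/- The number of elements of the interval L_n = [e, [1][2]⋯[n]] in the absolute order on B_n equals ∑_{k=0}^{⌊n/2⌋} C(n,2k) · 2^{n−k} · (2k−1)!!, where (2k−1)!! = 1·3···(2k−1) and (−1)!! = 1. -/
open scoped Classical

/-- The interval `L_n = [e, [1][2]⋯[n]]` of the absolute order on `B_n`. -/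
def Ln (n : ℕ) : Set (Equiv.Perm (Fin n × Bool)) :=
  {z | inB z ∧ absLe (reflB n) z (negPerm n)}

/-- The double factorial `(2k-1)!! = 1·3⋯(2k-1)`, with `(-1)!! = 1`. -/
def dfac (k : ℕ) : ℕ := ∏ i ∈ Finset.range k, (2 * i + 1)

variable {n : ℕ}


lemma negPerm_apply (p : Fin n × Bool) : negPerm n p = negp p := rfl

lemma negp_ne (p : Fin n × Bool) : negp p ≠ p := by
  cases p with
  | mk i b => cases b <;> simp [negp]

lemma negp_fst (p : Fin n × Bool) : (negp p).1 = p.1 := rfl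

@[simp] lemma negp_negp (p : Fin n × Bool) : negp (negp p) = p := negp_involutive p

lemma negp_inj {p q : Fin n × Bool} (h : negp p = negp q) : p = q :=
  negp_involutive.injective h

lemma negPerm_mul_self : negPerm n * negPerm n = 1 :=
  Equiv.ext fun p => negp_negp p

lemma negPerm_inv : (negPerm n)⁻¹ = negPerm n :=
  inv_eq_of_mul_eq_one_right negPerm_mul_self

lemma inB_one : inB (1 : Equiv.Perm (Fin n × Bool)) := fun _ => rfl

lemma inB_negPerm : inB (negPerm n) := fun _ => rfl

lemma inB_mul {u v : Equiv.Perm (Fin n × Bool)} (hu : inB u) (hv : inB v) :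
    inB (u * v) := fun p => by
  simp only [Equiv.Perm.mul_apply, hv p, hu (v p)]

lemma inB_inv {u : Equiv.Perm (Fin n × Bool)} (hu : inB u) : inB u⁻¹ := by
  intro p
  apply u.injective
  rw [← Equiv.Perm.mul_apply, mul_inv_cancel, Equiv.Perm.one_apply, hu (u⁻¹ p),
    ← Equiv.Perm.mul_apply, mul_inv_cancel, Equiv.Perm.one_apply]

lemma inB_comm {w : Equiv.Perm (Fin n × Bool)} (h : inB w) :
    w * negPerm n = negPerm n * w :=
  Equiv.ext fun p => h p

lemma inB_balanced (a : Fin n × Bool) : inB (Equiv.swap a (negp a)) := by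
  intro p
  rcases eq_or_ne p a with rfl | h1
  · rw [Equiv.swap_apply_right, Equiv.swap_apply_left]
    exact (negp_negp _).symm
  · rcases eq_or_ne p (negp a) with rfl | h2
    · rw [negp_negp, Equiv.swap_apply_left, Equiv.swap_apply_right]
    · have hn1 : negp p ≠ a := fun h => h2 (by rw [← h, negp_negp])
      have hn2 : negp p ≠ negp a := fun h => h1 (negp_inj h)
      rw [Equiv.swap_apply_of_ne_of_ne hn1 hn2, Equiv.swap_apply_of_ne_of_ne h1 h2]

section Paired

variable {a b : Fin n × Bool}

private lemma pr1 (hab' : b ≠ negp a) : negp b ≠ a := fun h => hab' (by rw [← h, negp_negp])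
private lemma pr2 (hab : b ≠ a) : negp b ≠ negp a := fun h => hab (negp_inj h)

lemma paired_apply_a (hab : b ≠ a) (hab' : b ≠ negp a) :
    (Equiv.swap a b * Equiv.swap (negp a) (negp b)) a = b := by
  rw [Equiv.Perm.mul_apply,
    Equiv.swap_apply_of_ne_of_ne (negp_ne a).symm (Ne.symm (pr1 hab')),
    Equiv.swap_apply_left]

lemma paired_apply_b (hab : b ≠ a) (hab' : b ≠ negp a) :
    (Equiv.swap a b * Equiv.swap (negp a) (negp b)) b = a := by
  rw [Equiv.Perm.mul_apply,
    Equiv.swap_apply_of_ne_of_ne hab' (negp_ne b).symm, Equiv.swap_apply_right]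

lemma paired_apply_na (hab : b ≠ a) (hab' : b ≠ negp a) :
    (Equiv.swap a b * Equiv.swap (negp a) (negp b)) (negp a) = negp b := by
  rw [Equiv.Perm.mul_apply, Equiv.swap_apply_left,
    Equiv.swap_apply_of_ne_of_ne (pr1 hab') (negp_ne b)]

lemma paired_apply_nb (hab : b ≠ a) (hab' : b ≠ negp a) :
    (Equiv.swap a b * Equiv.swap (negp a) (negp b)) (negp b) = negp a := by
  rw [Equiv.Perm.mul_apply, Equiv.swap_apply_right,
    Equiv.swap_apply_of_ne_of_ne (negp_ne a) (Ne.symm hab')]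

lemma paired_apply_other {p : Fin n × Bool} (h1 : p ≠ a) (h2 : p ≠ b)
    (h3 : p ≠ negp a) (h4 : p ≠ negp b) :
    (Equiv.swap a b * Equiv.swap (negp a) (negp b)) p = p := by
  rw [Equiv.Perm.mul_apply, Equiv.swap_apply_of_ne_of_ne h3 h4,
    Equiv.swap_apply_of_ne_of_ne h1 h2]

lemma inB_paired (hab : b ≠ a) (hab' : b ≠ negp a) :
    inB (Equiv.swap a b * Equiv.swap (negp a) (negp b)) := by
  intro p
  rcases eq_or_ne p a with rfl | h1
  · rw [paired_apply_na hab hab', paired_apply_a hab hab']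
  rcases eq_or_ne p b with rfl | h2
  · rw [paired_apply_nb hab hab', paired_apply_b hab hab']
  rcases eq_or_ne p (negp a) with rfl | h3
  · rw [negp_negp, paired_apply_a hab hab', paired_apply_na hab hab']
    exact (negp_negp _).symm
  rcases eq_or_ne p (negp b) with rfl | h4
  · rw [negp_negp, paired_apply_b hab hab', paired_apply_nb hab hab']
    exact (negp_negp _).symm
  · have hn1 : negp p ≠ negp a := fun h => h1 (negp_inj h)
    have hn2 : negp p ≠ negp b := fun h => h2 (negp_inj h)
    have hn3 : negp p ≠ a := fun h => h3 (by rw [← h, negp_negp])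
    have hn4 : negp p ≠ b := fun h => h4 (by rw [← h, negp_negp])
    rw [paired_apply_other hn3 hn4 hn1 hn2, paired_apply_other h1 h2 h3 h4]

lemma paired_sq (hab : b ≠ a) (hab' : b ≠ negp a) :
    (Equiv.swap a b * Equiv.swap (negp a) (negp b)) *
      (Equiv.swap a b * Equiv.swap (negp a) (negp b)) = 1 := by
  apply Equiv.ext
  intro p
  rw [Equiv.Perm.mul_apply, Equiv.Perm.one_apply]
  rcases eq_or_ne p a with rfl | hp1
  · rw [paired_apply_a hab hab', paired_apply_b hab hab']
  rcases eq_or_ne p b with rfl | hp2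
  · rw [paired_apply_b hab hab', paired_apply_a hab hab']
  rcases eq_or_ne p (negp a) with rfl | hp3
  · rw [paired_apply_na hab hab', paired_apply_nb hab hab']
  rcases eq_or_ne p (negp b) with rfl | hp4
  · rw [paired_apply_nb hab hab', paired_apply_na hab hab']
  · rw [paired_apply_other hp1 hp2 hp3 hp4, paired_apply_other hp1 hp2 hp3 hp4]

end Paired

lemma reflB_cases {t : Equiv.Perm (Fin n × Bool)} (ht : t ∈ reflB n) :
    (∃ a : Fin n × Bool, t = Equiv.swap a (negp a)) ∨
    (∃ a b : Fin n × Bool, b ≠ a ∧ b ≠ negp a ∧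
      t = Equiv.swap a b * Equiv.swap (negp a) (negp b)) := by
  rcases ht with ⟨i, rfl⟩ | ⟨i, j, hij, rfl⟩ | ⟨i, j, hij, rfl⟩
  · exact Or.inl ⟨(i, true), by rfl⟩
  · exact Or.inr ⟨(i, true), (j, true), by simp [Ne, Prod.ext_iff, hij.symm],
      by simp [negp, Prod.ext_iff], by rfl⟩
  · exact Or.inr ⟨(i, true), (j, false), by simp [Ne, Prod.ext_iff, hij.symm],
      by simp [negp, Prod.ext_iff, hij.symm], by rfl⟩

lemma reflB_inB {t : Equiv.Perm (Fin n × Bool)} (ht : t ∈ reflB n) : inB t := by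
  rcases reflB_cases ht with ⟨a, rfl⟩ | ⟨a, b, h1, h2, rfl⟩
  · exact inB_balanced a
  · exact inB_paired h1 h2

lemma reflB_mul_self {t : Equiv.Perm (Fin n × Bool)} (ht : t ∈ reflB n) : t * t = 1 := by
  rcases reflB_cases ht with ⟨a, rfl⟩ | ⟨a, b, h1, h2, rfl⟩
  · rw [Equiv.swap_mul_self]
  · exact paired_sq h1 h2

open Module

section LinAlg
variable {n : ℕ}


noncomputable def rho (w : Equiv.Perm (Fin n × Bool)) :
    ((Fin n × Bool) → ℚ) →ₗ[ℚ] ((Fin n × Bool) → ℚ) where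
  toFun F := fun p => F (w⁻¹ p)
  map_add' := fun F G => rfl
  map_smul' := fun c F => rfl

lemma rho_apply (w : Equiv.Perm (Fin n × Bool)) (F : (Fin n × Bool) → ℚ) (p) :
    rho w F p = F (w⁻¹ p) := rfl

lemma rho_one : rho (n := n) 1 = LinearMap.id := by
  apply LinearMap.ext; intro F; funext p; rfl

lemma rho_mul (u v : Equiv.Perm (Fin n × Bool)) :
    rho (u * v) = (rho u).comp (rho v) := by
  apply LinearMap.ext; intro F; funext p
  simp [rho_apply, mul_inv_rev]

noncomputable def Vneg (n : ℕ) : Submodule ℚ ((Fin n × Bool) → ℚ) where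
  carrier := {F | ∀ p, F (negp p) = -F p}
  add_mem' := fun hF hG p => by
    simp only [Pi.add_apply, hF p, hG p]; ring
  zero_mem' := fun p => by simp
  smul_mem' := fun c F hF p => by
    simp only [Pi.smul_apply, hF p]; ring_nf

lemma mem_Vneg {F : (Fin n × Bool) → ℚ} :
    F ∈ Vneg n ↔ ∀ p, F (negp p) = -F p := Iff.rfl

noncomputable def fixS (w : Equiv.Perm (Fin n × Bool)) :
    Submodule ℚ ((Fin n × Bool) → ℚ) :=
  LinearMap.ker (rho w - LinearMap.id)

lemma mem_fixS {w : Equiv.Perm (Fin n × Bool)} {F : (Fin n × Bool) → ℚ} :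
    F ∈ fixS w ↔ rho w F = F := by
  rw [fixS, LinearMap.mem_ker, LinearMap.sub_apply, LinearMap.id_apply, sub_eq_zero]

noncomputable def Fm (w : Equiv.Perm (Fin n × Bool)) :
    Submodule ℚ ((Fin n × Bool) → ℚ) :=
  Vneg n ⊓ fixS w

lemma mem_Fm {w : Equiv.Perm (Fin n × Bool)} {F : (Fin n × Bool) → ℚ} :
    F ∈ Fm w ↔ F ∈ Vneg n ∧ rho w F = F := by
  rw [Fm, Submodule.mem_inf, mem_fixS]

noncomputable def VnegEquiv (n : ℕ) : (Vneg n) ≃ₗ[ℚ] (Fin n → ℚ) where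
  toFun F := fun i => F.1 (i, true)
  map_add' := fun F G => rfl
  map_smul' := fun c F => rfl
  invFun f := ⟨fun p => if p.2 = true then f p.1 else -f p.1, by
    intro p
    rcases p with ⟨i, b⟩
    cases b <;> simp [negp]⟩
  left_inv := by
    intro F
    apply Subtype.ext
    funext p
    rcases p with ⟨i, b⟩
    cases b
    · have := F.2 (i, true)
      simp only [negp, Bool.not_true] at this
      simp [this]
    · simp
  right_inv := by intro f; funext i; simp

lemma finrank_Vneg : finrank ℚ (Vneg n) = n := by
  rw [LinearEquiv.finrank_eq (VnegEquiv n), Module.finrank_fintype_fun_eq_card,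
    Fintype.card_fin]

lemma Fm_one : Fm (1 : Equiv.Perm (Fin n × Bool)) = Vneg n := by
  apply le_antisymm inf_le_left
  intro F hF
  rw [show Vneg n ⊓ fixS 1 = Fm 1 from rfl, mem_Fm]
  exact ⟨hF, by rw [rho_one]; rfl⟩

lemma finrank_inf_ker_le (W : Submodule ℚ ((Fin n × Bool) → ℚ))
    (L : ((Fin n × Bool) → ℚ) →ₗ[ℚ] ℚ) :
    finrank ℚ W ≤ finrank ℚ ((W ⊓ LinearMap.ker L : Submodule ℚ _)) + 1 := by
  have h1 := LinearMap.finrank_range_add_finrank_ker (L.comp W.subtype)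
  have h2 : LinearMap.ker (L.comp W.subtype) = Submodule.comap W.subtype (LinearMap.ker L) :=
    LinearMap.ker_comp _ _
  have h3 : finrank ℚ (Submodule.comap W.subtype (LinearMap.ker L)) =
      finrank ℚ ((W ⊓ LinearMap.ker L : Submodule ℚ _)) := by
    rw [← Submodule.map_comap_subtype]
    exact (LinearEquiv.finrank_eq
      (Submodule.equivMapOfInjective W.subtype W.injective_subtype _))
  have h4 : finrank ℚ (LinearMap.range (L.comp W.subtype)) ≤ 1 := by
    have := Submodule.finrank_le (LinearMap.range (L.comp W.subtype))
    simpa using this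
  rw [h2, h3] at h1
  omega
lemma Fm_mul_le {u v : Equiv.Perm (Fin n × Bool)} : Fm u ⊓ Fm v ≤ Fm (u * v) := by
  intro F hF
  rw [Submodule.mem_inf, mem_Fm, mem_Fm] at hF
  rw [mem_Fm]
  refine ⟨hF.1.1, ?_⟩
  rw [rho_mul, LinearMap.comp_apply, hF.2.2, hF.1.2]

end LinAlg

lemma Fm_negPerm : Fm (negPerm n) = ⊥ := by
  rw [eq_bot_iff]
  intro F hF
  rw [mem_Fm] at hF
  rw [Submodule.mem_bot]
  funext p
  have h1 : rho (negPerm n) F p = F p := by rw [hF.2]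
  rw [rho_apply, negPerm_inv, negPerm_apply, hF.1 p] at h1
  have : F p = 0 := by linarith
  simpa using this

lemma refl_fix_bound {t : Equiv.Perm (Fin n × Bool)} (ht : t ∈ reflB n) :
    (n : ℕ) ≤ finrank ℚ (Fm t) + 1 := by
  have key : ∃ L : ((Fin n × Bool) → ℚ) →ₗ[ℚ] ℚ, Vneg n ⊓ LinearMap.ker L ≤ Fm t := by
    rcases reflB_cases ht with ⟨a, rfl⟩ | ⟨a, b, h1, h2, rfl⟩
    · refine ⟨LinearMap.proj a, ?_⟩
      intro F hF
      rw [Submodule.mem_inf, LinearMap.mem_ker, LinearMap.proj_apply] at hF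
      obtain ⟨hV, hFa⟩ := hF
      have hFna : F (negp a) = 0 := by rw [hV a, hFa, neg_zero]
      rw [mem_Fm]
      refine ⟨hV, ?_⟩
      funext p
      rw [rho_apply, Equiv.swap_inv]
      rcases eq_or_ne p a with rfl | hp1
      · rw [Equiv.swap_apply_left, hFna, hFa]
      rcases eq_or_ne p (negp a) with rfl | hp2
      · rw [Equiv.swap_apply_right, hFa, hFna]
      · rw [Equiv.swap_apply_of_ne_of_ne hp1 hp2]
    · refine ⟨(LinearMap.proj a : ((Fin n × Bool) → ℚ) →ₗ[ℚ] ℚ) - (LinearMap.proj b : ((Fin n × Bool) → ℚ) →ₗ[ℚ] ℚ), ?_⟩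
      intro F hF
      rw [Submodule.mem_inf, LinearMap.mem_ker, LinearMap.sub_apply,
        LinearMap.proj_apply, LinearMap.proj_apply, sub_eq_zero] at hF
      obtain ⟨hV, hab⟩ := hF
      have hnab : F (negp a) = F (negp b) := by rw [hV a, hV b, hab]
      rw [mem_Fm]
      refine ⟨hV, ?_⟩
      have hinv : (Equiv.swap a b * Equiv.swap (negp a) (negp b))⁻¹ =
          Equiv.swap a b * Equiv.swap (negp a) (negp b) :=
        inv_eq_of_mul_eq_one_right (paired_sq h1 h2)
      funext p
      rw [rho_apply, hinv]
      rcases eq_or_ne p a with rfl | hp1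
      · rw [paired_apply_a h1 h2, hab]
      rcases eq_or_ne p b with rfl | hp2
      · rw [paired_apply_b h1 h2, hab]
      rcases eq_or_ne p (negp a) with rfl | hp3
      · rw [paired_apply_na h1 h2, hnab]
      rcases eq_or_ne p (negp b) with rfl | hp4
      · rw [paired_apply_nb h1 h2, hnab]
      · rw [paired_apply_other hp1 hp2 hp3 hp4]
  obtain ⟨L, hL⟩ := key
  have b1 := finrank_inf_ker_le (Vneg n) L
  have b2 : finrank ℚ ((Vneg n ⊓ LinearMap.ker L : Submodule ℚ _)) ≤ finrank ℚ (Fm t) :=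
    Submodule.finrank_mono hL
  rw [finrank_Vneg] at b1
  omega

lemma Fm_subadd (u v : Equiv.Perm (Fin n × Bool)) :
    finrank ℚ (Fm u) + finrank ℚ (Fm v) ≤ n + finrank ℚ (Fm (u * v)) := by
  have h := Submodule.finrank_sup_add_finrank_inf_eq (Fm u) (Fm v)
  have h1 : finrank ℚ ((Fm u ⊔ Fm v : Submodule ℚ _)) ≤ n := by
    have hle : Fm u ⊔ Fm v ≤ Vneg n := sup_le inf_le_left inf_le_left
    calc finrank ℚ ((Fm u ⊔ Fm v : Submodule ℚ _)) ≤ finrank ℚ (Vneg n) :=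
          Submodule.finrank_mono hle
    _ = n := finrank_Vneg
  have h2 : finrank ℚ ((Fm u ⊓ Fm v : Submodule ℚ _)) ≤ finrank ℚ (Fm (u * v)) :=
    Submodule.finrank_mono Fm_mul_le
  omega

lemma word_fix_bound : ∀ l : List (Equiv.Perm (Fin n × Bool)),
    (∀ t ∈ l, t ∈ reflB n) → n ≤ finrank ℚ (Fm l.prod) + l.length := by
  intro l
  induction l with
  | nil =>
    intro _
    rw [List.prod_nil, List.length_nil, Fm_one, finrank_Vneg]
    omega
  | cons t l ih =>
    intro h
    have ht := h t List.mem_cons_self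
    have hl := ih (fun s hs => h s (List.mem_cons_of_mem _ hs))
    have h1 := Fm_subadd t l.prod
    have h2 := refl_fix_bound ht
    rw [List.prod_cons, List.length_cons]
    omega

-- Generation: every element of B_n is a product of reflections

lemma exists_refl_step {w : Equiv.Perm (Fin n × Bool)} (hB : inB w) {i : Fin n}
    (hi : w (i, true) ≠ (i, true)) :
    ∃ t ∈ reflB n, t (w (i, true)) = (i, true) ∧
      (∀ p, w p = p → t p = p) ∧ t * t = 1 := by
  set q := w (i, true) with hq
  have hwq : w (i, false) = negp q := by
    have := hB (i, true)
    simpa [negp] using this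
  have hqmoved : w q ≠ q := by
    intro h
    exact hi (w.injective (by rw [h, ← hq]))
  have hnqmoved : w (negp q) ≠ negp q := by
    intro h
    rw [hB q, ] at h
    exact hqmoved (negp_inj h)
  have hifmoved : w (i, false) ≠ (i, false) := by
    rw [hwq]
    intro h
    apply hi
    rw [hq] at h
    have : q = negp (i, false) := by rw [← h, negp_negp]
    simpa [negp] using this
  rcases eq_or_ne q ((i, false) : Fin n × Bool) with hqf | hqf
  · -- balanced reflection
    refine ⟨Equiv.swap (i, true) (i, false), Or.inl ⟨i, rfl⟩, ?_, ?_, Equiv.swap_mul_self _ _⟩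
    · rw [hqf, Equiv.swap_apply_right]
    · intro p hp
      apply Equiv.swap_apply_of_ne_of_ne
      · intro h; rw [h] at hp; exact hi hp
      · intro h; rw [h] at hp; exact hifmoved hp
  · -- paired reflection
    have hqa : q ≠ (i, true) := fun h => hi (hq ▸ h)
    have hqna : q ≠ negp (i, true) := by simpa [negp] using hqf
    have hrefl : Equiv.swap (i, true) q * Equiv.swap (negp (i, true)) (negp q) ∈ reflB n := by
      rcases q with ⟨j, bj⟩
      have hij : i ≠ j := by
        intro h
        subst h
        cases bj
        · exact hqf rfl
        · exact hqa rfl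
      cases bj
      · exact Or.inr (Or.inr ⟨i, j, hij, rfl⟩)
      · exact Or.inr (Or.inl ⟨i, j, hij, rfl⟩)
    refine ⟨_, hrefl, ?_, ?_, paired_sq hqa hqna⟩
    · exact paired_apply_b hqa hqna
    · intro p hp
      apply paired_apply_other
      · intro h; rw [h] at hp; exact hi hp
      · intro h; rw [h] at hp; exact hqmoved hp
      · intro h; rw [h] at hp; exact hifmoved (by simpa [negp] using hp)
      · intro h; rw [h] at hp; exact hnqmoved hp

lemma gen_aux : ∀ (m : ℕ) (w : Equiv.Perm (Fin n × Bool)), w.support.card ≤ m → inB w →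
    ∃ l : List (Equiv.Perm (Fin n × Bool)), (∀ t ∈ l, t ∈ reflB n) ∧ l.prod = w := by
  intro m
  induction m with
  | zero =>
    intro w hw _
    have : w = 1 := by
      rw [← Equiv.Perm.support_eq_empty_iff]
      exact Finset.card_eq_zero.mp (Nat.le_zero.mp hw)
    exact ⟨[], by simp, by simp [this]⟩
  | succ m ih =>
    intro w hw hB
    by_cases h1 : w = 1
    · exact ⟨[], by simp, by simp [h1]⟩
    have : ∃ i : Fin n, w (i, true) ≠ (i, true) := by
      obtain ⟨p, hp⟩ : ∃ p, w p ≠ p := by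
        by_contra h
        push_neg at h
        exact h1 (Equiv.ext h)
      rcases p with ⟨i, b⟩
      cases b
      · refine ⟨i, fun h => hp ?_⟩
        have := hB (i, true)
        simp only [negp, Bool.not_true] at this
        rw [h] at this
        simpa [negp] using this
      · exact ⟨i, hp⟩
    obtain ⟨i, hi⟩ := this
    obtain ⟨t, htr, htq, htfix, htsq⟩ := exists_refl_step hB hi
    have hsub : (t * w).support ⊆ w.support := by
      intro p hp
      rw [Equiv.Perm.mem_support] at hp ⊢
      intro hwp
      apply hp
      rw [Equiv.Perm.mul_apply, hwp, htfix p hwp]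
    have hmem : (i, true) ∈ w.support := Equiv.Perm.mem_support.mpr hi
    have hnmem : (i, true) ∉ (t * w).support := by
      rw [Equiv.Perm.mem_support]
      push_neg
      rw [Equiv.Perm.mul_apply, htq]
    have hcard : (t * w).support.card < w.support.card :=
      Finset.card_lt_card ⟨hsub, fun h => hnmem (h hmem)⟩
    have hBtw : inB (t * w) := inB_mul (reflB_inB htr) hB
    obtain ⟨l, hl1, hl2⟩ := ih (t * w) (by omega) hBtw
    refine ⟨t :: l, ?_, ?_⟩
    · intro s hs
      rcases List.mem_cons.mp hs with rfl | hs
      · exact htr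
      · exact hl1 s hs
    · rw [List.prod_cons, hl2, ← mul_assoc, htsq, one_mul]

lemma inB_word {w : Equiv.Perm (Fin n × Bool)} (hB : inB w) :
    ∃ l : List (Equiv.Perm (Fin n × Bool)), (∀ t ∈ l, t ∈ reflB n) ∧ l.prod = w :=
  gen_aux w.support.card w le_rfl hB

lemma wordLen_le {G : Type*} [Group G] {T : Set G} {w : G} {l : List G}
    (h : ∀ t ∈ l, t ∈ T) (hp : l.prod = w) : wordLen T w ≤ l.length :=
  Nat.sInf_le ⟨l, rfl, h, hp⟩

lemma exists_min_word {G : Type*} [Group G] {T : Set G} {w : G}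
    (h : ∃ l : List G, (∀ t ∈ l, t ∈ T) ∧ l.prod = w) :
    ∃ l : List G, (∀ t ∈ l, t ∈ T) ∧ l.prod = w ∧ l.length = wordLen T w := by
  obtain ⟨l0, h1, h2⟩ := h
  have hne : {k | ∃ l : List G, l.length = k ∧ (∀ t ∈ l, t ∈ T) ∧ l.prod = w}.Nonempty :=
    ⟨l0.length, l0, rfl, h1, h2⟩
  obtain ⟨l, hlen, hT, hprod⟩ := Nat.sInf_mem hne
  exact ⟨l, hT, hprod, hlen⟩

lemma wordLen_lb {w : Equiv.Perm (Fin n × Bool)} (hB : inB w) :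
    n ≤ finrank ℚ (Fm w) + wordLen (reflB n) w := by
  obtain ⟨l, hT, hp, hlen⟩ := exists_min_word (inB_word hB)
  have h := word_fix_bound l hT
  rw [hp, hlen] at h
  exact h

lemma wordLen_mul_le {u v : Equiv.Perm (Fin n × Bool)} (hu : inB u) (hv : inB v) :
    wordLen (reflB n) (u * v) ≤ wordLen (reflB n) u + wordLen (reflB n) v := by
  obtain ⟨l1, h1T, h1p, h1len⟩ := exists_min_word (inB_word hu)
  obtain ⟨l2, h2T, h2p, h2len⟩ := exists_min_word (inB_word hv)
  have h := wordLen_le (T := reflB n) (w := u * v) (l := l1 ++ l2)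
    (fun t ht => by
      rcases List.mem_append.mp ht with h | h
      · exact h1T t h
      · exact h2T t h)
    (by rw [List.prod_append, h1p, h2p])
  rw [List.length_append, h1len, h2len] at h
  exact h

lemma flip_prod (l : List (Fin n)) (hnd : l.Nodup) (p : Fin n × Bool) :
    ((l.map (fun i => Equiv.swap ((i, true) : Fin n × Bool) (i, false))).prod) p =
      if p.1 ∈ l then negp p else p := by
  induction l with
  | nil => simp
  | cons a l ih =>
    have hnd' : l.Nodup := (List.nodup_cons.mp hnd).2
    have ha : a ∉ l := (List.nodup_cons.mp hnd).1
    rw [List.map_cons, List.prod_cons, Equiv.Perm.mul_apply, ih hnd']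
    by_cases h1 : p.1 ∈ l
    · rw [if_pos h1, if_pos (List.mem_cons_of_mem _ h1)]
      have hne : p.1 ≠ a := fun h => ha (h ▸ h1)
      apply Equiv.swap_apply_of_ne_of_ne
      · exact fun h => hne (congrArg Prod.fst h)
      · exact fun h => hne (congrArg Prod.fst h)
    · rw [if_neg h1]
      by_cases h2 : p.1 = a
      · rw [if_pos (by rw [h2]; exact List.mem_cons_self)]
        rcases p with ⟨j, b⟩
        simp only at h2
        subst h2
        cases b
        · rw [Equiv.swap_apply_right]; rfl
        · rw [Equiv.swap_apply_left]; rfl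
      · rw [if_neg (by
          intro h
          rcases List.mem_cons.mp h with h | h
          · exact h2 h
          · exact h1 h)]
        apply Equiv.swap_apply_of_ne_of_ne
        · exact fun h => h2 (congrArg Prod.fst h)
        · exact fun h => h2 (congrArg Prod.fst h)

lemma negPerm_eq_prod :
    ((List.finRange n).map (fun i => Equiv.swap ((i, true) : Fin n × Bool) (i, false))).prod
      = negPerm n := by
  apply Equiv.ext
  intro p
  rw [flip_prod _ (List.nodup_finRange n) p, if_pos (List.mem_finRange p.1)]
  rfl

lemma wordLen_negPerm : wordLen (reflB n) (negPerm n) = n := by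
  apply le_antisymm
  · have h := wordLen_le (T := reflB n) (w := negPerm n)
      (l := (List.finRange n).map (fun i => Equiv.swap ((i, true) : Fin n × Bool) (i, false)))
      (fun t ht => by
        obtain ⟨i, _, rfl⟩ := List.mem_map.mp ht
        exact Or.inl ⟨i, rfl⟩)
      negPerm_eq_prod
    simpa using h
  · have h := wordLen_lb (inB_negPerm (n := n))
    rw [Fm_negPerm, finrank_bot] at h
    simpa using h

noncomputable def Pset (z : Equiv.Perm (Fin n × Bool)) : Finset (Fin n) :=
  Finset.univ.filter (fun i => (z (i, true)).1 ≠ i)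

noncomputable def Bset (z : Equiv.Perm (Fin n × Bool)) : Finset (Fin n) :=
  Finset.univ.filter (fun i => z (i, true) = (i, false))

noncomputable def Fset (z : Equiv.Perm (Fin n × Bool)) : Finset (Fin n) :=
  Finset.univ.filter (fun i => z (i, true) = (i, true))

lemma mem_Pset {z : Equiv.Perm (Fin n × Bool)} {i : Fin n} :
    i ∈ Pset z ↔ (z (i, true)).1 ≠ i := by simp [Pset]

lemma mem_Bset {z : Equiv.Perm (Fin n × Bool)} {i : Fin n} :
    i ∈ Bset z ↔ z (i, true) = (i, false) := by simp [Bset]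

lemma mem_Fset {z : Equiv.Perm (Fin n × Bool)} {i : Fin n} :
    i ∈ Fset z ↔ z (i, true) = (i, true) := by simp [Fset]

lemma card_BPF (z : Equiv.Perm (Fin n × Bool)) :
    (Bset z).card + (Fset z).card + (Pset z).card = n := by
  classical
  have h1 := Finset.card_filter_add_card_filter_not
    (s := (Finset.univ : Finset (Fin n))) (p := fun i => (z (i, true)).1 = i)
  have h2 : Finset.univ.filter (fun i : Fin n => (z (i, true)).1 = i) = Bset z ∪ Fset z := by
    ext i
    rw [Finset.mem_filter, Finset.mem_union, mem_Bset, mem_Fset]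
    simp only [Finset.mem_univ, true_and]
    constructor
    · intro h
      have hq : z (i, true) = ((z (i, true)).1, (z (i, true)).2) := rfl
      rcases hb : (z (i, true)).2 with _ | _
      · left; rw [hq, h, hb]
      · right; rw [hq, h, hb]
    · rintro (h | h) <;> rw [h]
  have h3 : Disjoint (Bset z) (Fset z) := by
    rw [Finset.disjoint_left]
    intro i hb hf
    rw [mem_Bset] at hb
    rw [mem_Fset] at hf
    rw [hb] at hf
    simpa using hf
  have h4 : (Finset.univ.filter (fun i : Fin n => ¬ (z (i, true)).1 = i)).card = (Pset z).card := by
    rfl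
  have h5 : (Bset z ∪ Fset z).card = (Bset z).card + (Fset z).card :=
    Finset.card_union_of_disjoint h3
  rw [h4, h2, h5] at h1
  simpa using h1

lemma zinv_apply {z : Equiv.Perm (Fin n × Bool)} (hz : z * z = 1) (p : Fin n × Bool) :
    z (z p) = p := by
  have := Equiv.ext_iff.mp hz p
  simpa using this

lemma paired_mem_reflB {i : Fin n} {q : Fin n × Bool} (hq1 : q ≠ (i, true))
    (hq2 : q ≠ (i, false)) :
    Equiv.swap (i, true) q * Equiv.swap (negp (i, true)) (negp q) ∈ reflB n := by
  rcases q with ⟨j, bj⟩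
  have hij : i ≠ j := by
    intro h
    subst h
    cases bj
    · exact hq2 rfl
    · exact hq1 rfl
  cases bj
  · exact Or.inr (Or.inr ⟨i, j, hij, rfl⟩)
  · exact Or.inr (Or.inl ⟨i, j, hij, rfl⟩)


lemma inv_word : ∀ (m : ℕ) (z : Equiv.Perm (Fin n × Bool)), (Pset z).card ≤ m → inB z →
    z * z = 1 →
    ∃ l : List (Equiv.Perm (Fin n × Bool)), (∀ t ∈ l, t ∈ reflB n) ∧ l.prod = z ∧
      l.length ≤ (Bset z).card + (Pset z).card / 2 := by
  intro m
  induction m with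
  | zero =>
    intro z hP hB hz
    refine ⟨(Bset z).toList.map (fun i => Equiv.swap ((i, true) : Fin n × Bool) (i, false)),
      ?_, ?_, ?_⟩
    · intro t ht
      obtain ⟨i, _, rfl⟩ := List.mem_map.mp ht
      exact Or.inl ⟨i, rfl⟩
    · apply Equiv.ext
      intro p
      rw [flip_prod _ (Finset.nodup_toList _) p]
      have hmem : (p.1 ∈ (Bset z).toList) = (p.1 ∈ Bset z) := by
        rw [Finset.mem_toList]
      have hfix : ∀ j : Fin n, z (j, true) = if j ∈ Bset z then (j, false) else (j, true) := by
        intro j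
        by_cases hj : j ∈ Bset z
        · rw [if_pos hj]; exact mem_Bset.mp hj
        · rw [if_neg hj]
          have hjP : (z (j, true)).1 = j := by
            by_contra hc
            have hmem2 : j ∈ Pset z := mem_Pset.mpr hc
            rw [Finset.card_eq_zero.mp (Nat.le_zero.mp hP)] at hmem2
            simpa using hmem2
          have hq : z (j, true) = ((z (j, true)).1, (z (j, true)).2) := rfl
          rcases hb : (z (j, true)).2 with _ | _
          · exact absurd (by rw [hq, hjP, hb]) (fun h => hj (mem_Bset.mpr h))
          · rw [hq, hjP, hb]
      rcases p with ⟨j, b⟩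
      cases b
      · have hzp : z (j, false) = negp (z (j, true)) := by
          have := hB (j, true)
          simpa [negp] using this
        simp only [hmem]
        by_cases hj : j ∈ Bset z
        · rw [if_pos hj, hzp, hfix j, if_pos hj]
        · rw [if_neg hj, hzp, hfix j, if_neg hj]
          rfl
      · simp only [hmem]
        by_cases hj : j ∈ Bset z
        · rw [if_pos hj, hfix j, if_pos hj]; rfl
        · rw [if_neg hj, hfix j, if_neg hj]
    · rw [List.length_map, Finset.length_toList]
      omega
  | succ m ih =>
    intro z hP hB hz
    rcases Nat.eq_zero_or_pos (Pset z).card with hP0 | hPpos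
    · exact ih z (by omega) hB hz
    obtain ⟨i, hi⟩ := Finset.card_pos.mp hPpos
    obtain ⟨q, hq⟩ : ∃ q, z (i, true) = q := ⟨_, rfl⟩
    have hiP : q.1 ≠ i := by rw [← hq]; exact mem_Pset.mp hi
    have hq1 : q ≠ ((i, true) : Fin n × Bool) := fun h => hiP (congrArg Prod.fst h)
    have hq2 : q ≠ negp ((i, true) : Fin n × Bool) := fun h => hiP (congrArg Prod.fst h)
    have hrrefl : Equiv.swap ((i, true) : Fin n × Bool) q *
        Equiv.swap (negp ((i, true) : Fin n × Bool)) (negp q) ∈ reflB n :=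
      paired_mem_reflB hq1 (by simpa [negp] using hq2)
    have hrsq := paired_sq hq1 hq2
    obtain ⟨r, hr⟩ : ∃ r, Equiv.swap ((i, true) : Fin n × Bool) q *
        Equiv.swap (negp ((i, true) : Fin n × Bool)) (negp q) = r := ⟨_, rfl⟩
    rw [hr] at hrrefl hrsq
    obtain ⟨z', hz'⟩ : ∃ z', r * z = z' := ⟨_, rfl⟩
    have hzq : z q = (i, true) := by rw [← hq]; exact zinv_apply hz _
    have hzna : z (negp (i, true)) = negp q := by rw [hB (i, true), hq]
    have hznq : z (negp q) = negp (i, true) := by rw [hB q, hzq]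
    have hz'a : z' (i, true) = (i, true) := by
      rw [← hz', Equiv.Perm.mul_apply, hq, ← hr, paired_apply_b hq1 hq2]
    have hz'q : z' q = q := by
      rw [← hz', Equiv.Perm.mul_apply, hzq, ← hr, paired_apply_a hq1 hq2]
    have hz'na : z' (negp (i, true)) = negp (i, true) := by
      rw [← hz', Equiv.Perm.mul_apply, hzna, ← hr, paired_apply_nb hq1 hq2]
    have hz'nq : z' (negp q) = negp q := by
      rw [← hz', Equiv.Perm.mul_apply, hznq, ← hr, paired_apply_na hq1 hq2]
    have hout : ∀ p : Fin n × Bool, p ≠ (i, true) → p ≠ q → p ≠ negp (i, true) →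
        p ≠ negp q → z' p = z p := by
      intro p h1 h2 h3 h4
      rw [← hz', Equiv.Perm.mul_apply, ← hr]
      apply paired_apply_other
      · intro h; exact h2 (z.injective (by rw [h, hzq]))
      · intro h; exact h1 (z.injective (by rw [h, hq]))
      · intro h; exact h4 (z.injective (by rw [h, hznq]))
      · intro h; exact h3 (z.injective (by rw [h, hzna]))
    have hBz' : inB z' := by rw [← hz']; exact inB_mul (reflB_inB hrrefl) hB
    have hz'sq : z' * z' = 1 := by
      apply Equiv.ext
      intro p
      rw [Equiv.Perm.mul_apply, Equiv.Perm.one_apply]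
      rcases eq_or_ne p (i, true) with rfl | h1
      · rw [hz'a, hz'a]
      rcases eq_or_ne p q with rfl | h2
      · rw [hz'q, hz'q]
      rcases eq_or_ne p (negp (i, true)) with rfl | h3
      · rw [hz'na, hz'na]
      rcases eq_or_ne p (negp q) with rfl | h4
      · rw [hz'nq, hz'nq]
      · have g1 : z p ≠ (i, true) := by
          intro h
          apply h2
          have e := zinv_apply hz p
          rw [h, hq] at e
          exact e.symm
        have g2 : z p ≠ q := by
          intro h
          apply h1
          have e := zinv_apply hz p
          rw [h, hzq] at e
          exact e.symm
        have g3 : z p ≠ negp (i, true) := by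
          intro h
          apply h4
          have e := zinv_apply hz p
          rw [h, hzna] at e
          exact e.symm
        have g4 : z p ≠ negp q := by
          intro h
          apply h3
          have e := zinv_apply hz p
          rw [h, hznq] at e
          exact e.symm
        rw [hout p h1 h2 h3 h4, hout (z p) g1 g2 g3 g4, zinv_apply hz p]
    have houtc : ∀ l : Fin n, l ≠ i → l ≠ q.1 → z' (l, true) = z (l, true) := by
      intro l hl1 hl2
      apply hout
      · intro h; exact hl1 (congrArg Prod.fst h)
      · intro h; exact hl2 (congrArg Prod.fst h)
      · intro h
        have := congrArg Prod.snd h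
        simp [negp] at this
      · intro h; exact hl2 (congrArg Prod.fst h)
    have hz'j : z' (q.1, true) = (q.1, true) := by
      rcases hb : q.2 with _ | _
      · have hqe : ((q.1, true) : Fin n × Bool) = negp q := by
          rcases q with ⟨j0, b0⟩
          simp only at hb
          subst hb
          rfl
        rw [hqe, hz'nq]
      · have hqe : ((q.1, true) : Fin n × Bool) = q := by
          rcases q with ⟨j0, b0⟩
          simp only at hb
          subst hb
          rfl
        rw [hqe, hz'q]
    have hzj : z (q.1, true) = (i, q.2) := by
      rcases hb : q.2 with _ | _
      · have hqe : ((q.1, true) : Fin n × Bool) = negp q := by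
          rcases q with ⟨j0, b0⟩
          simp only at hb
          subst hb
          rfl
        rw [hqe, hznq]
        simp [negp, hb]
      · have hqe : ((q.1, true) : Fin n × Bool) = q := by
          rcases q with ⟨j0, b0⟩
          simp only at hb
          subst hb
          rfl
        rw [hqe, hzq]
    have hjP : q.1 ∈ Pset z := by
      rw [mem_Pset, hzj]
      exact fun h => hiP h.symm
    have hPz' : Pset z' = Pset z \ {i, q.1} := by
      ext l
      rw [mem_Pset, Finset.mem_sdiff, mem_Pset, Finset.mem_insert, Finset.mem_singleton]
      by_cases hl1 : l = i
      · subst hl1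
        rw [hz'a]
        simp
      by_cases hl2 : l = q.1
      · subst hl2
        rw [hz'j]
        simp
      · rw [houtc l hl1 hl2]
        simp [hl1, hl2]
    have hBseteq : Bset z' = Bset z := by
      ext l
      rw [mem_Bset, mem_Bset]
      by_cases hl1 : l = i
      · subst hl1
        rw [hz'a, hq]
        constructor
        · intro h; exact absurd (congrArg Prod.snd h) (by simp)
        · intro h; exact absurd (congrArg Prod.fst h) (by simpa using hiP)
      by_cases hl2 : l = q.1
      · subst hl2
        rw [hz'j, hzj]
        constructor
        · intro h; exact absurd (congrArg Prod.snd h) (by simp)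
        · intro h; exact absurd (congrArg Prod.fst h) (by simpa using fun e => hiP e.symm)
      · rw [houtc l hl1 hl2]
    have hsubP : ({i, q.1} : Finset (Fin n)) ⊆ Pset z := by
      intro l hl
      rcases Finset.mem_insert.mp hl with rfl | hl
      · exact hi
      · rw [Finset.mem_singleton] at hl
        subst hl
        exact hjP
    have hcard2 : ({i, q.1} : Finset (Fin n)).card = 2 := by
      rw [Finset.card_insert_of_notMem (by simpa using fun h => hiP h.symm),
        Finset.card_singleton]
    have hcardP : (Pset z \ {i, q.1}).card = (Pset z).card - 2 := by
      rw [Finset.card_sdiff_of_subset hsubP, hcard2]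
    have hge2 : 2 ≤ (Pset z).card := by
      calc 2 = ({i, q.1} : Finset (Fin n)).card := hcard2.symm
      _ ≤ (Pset z).card := Finset.card_le_card hsubP
    obtain ⟨l', hl'T, hl'p, hl'len⟩ := ih z' (by rw [hPz', hcardP]; omega) hBz' hz'sq
    refine ⟨r :: l', ?_, ?_, ?_⟩
    · intro t ht
      rcases List.mem_cons.mp ht with rfl | ht
      · exact hrrefl
      · exact hl'T t ht
    · rw [List.prod_cons, hl'p, ← hz', ← mul_assoc, hrsq, one_mul]
    · rw [List.length_cons]
      rw [hBseteq, hPz', hcardP] at hl'len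
      omega

lemma inv_absLe {z : Equiv.Perm (Fin n × Bool)} (hB : inB z) (hz : z * z = 1) :
    absLe (reflB n) z (negPerm n) := by
  have hzinv : z⁻¹ = z := inv_eq_of_mul_eq_one_right hz
  have hBy : inB (z * negPerm n) := inB_mul hB inB_negPerm
  have hysq : (z * negPerm n) * (z * negPerm n) = 1 := by
    calc (z * negPerm n) * (z * negPerm n)
        = z * (negPerm n * z) * negPerm n := by group
    _ = z * (z * negPerm n) * negPerm n := by rw [← inB_comm hB]
    _ = (z * z) * (negPerm n * negPerm n) := by group
    _ = 1 := by rw [hz, negPerm_mul_self, one_mul]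
  obtain ⟨l1, h1T, h1p, h1len⟩ := inv_word (Pset z).card z le_rfl hB hz
  obtain ⟨l2, h2T, h2p, h2len⟩ :=
    inv_word (Pset (z * negPerm n)).card (z * negPerm n) le_rfl hBy hysq
  have happ : ∀ l : Fin n, (z * negPerm n) (l, true) = negp (z (l, true)) := by
    intro l
    have h1 : (z * negPerm n) (l, true) = z (negp (l, true)) := rfl
    rw [h1, hB (l, true)]
  have hyB : Bset (z * negPerm n) = Fset z := by
    ext l
    rw [mem_Bset, mem_Fset, happ l]
    constructor
    · intro h
      have := congrArg negp h
      rw [negp_negp] at this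
      rw [this]
      rfl
    · intro h
      rw [h]
      rfl
  have hyP : Pset (z * negPerm n) = Pset z := by
    ext l
    rw [mem_Pset, mem_Pset, happ l, negp_fst]
  have hcard := card_BPF z
  rw [hyB, hyP] at h2len
  have hub : wordLen (reflB n) z + wordLen (reflB n) (z * negPerm n) ≤ n := by
    have u1 := wordLen_le h1T h1p
    have u2 := wordLen_le h2T h2p
    omega
  have hlb : n ≤ wordLen (reflB n) z + wordLen (reflB n) (z * negPerm n) := by
    have h := wordLen_mul_le hB hBy
    have he : z * (z * negPerm n) = negPerm n := by
      rw [← mul_assoc, hz, one_mul]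
    rw [he, wordLen_negPerm] at h
    exact h
  rw [absLe, hzinv, wordLen_negPerm]
  omega

lemma absLe_inv {z : Equiv.Perm (Fin n × Bool)} (hB : inB z)
    (habs : absLe (reflB n) z (negPerm n)) : z * z = 1 := by
  have hBy : inB (z⁻¹ * negPerm n) := inB_mul (inB_inv hB) inB_negPerm
  have hzy : z * (z⁻¹ * negPerm n) = negPerm n := by
    rw [← mul_assoc, mul_inv_cancel, one_mul]
  have habs' : wordLen (reflB n) z + wordLen (reflB n) (z⁻¹ * negPerm n) = n := by
    rw [absLe, wordLen_negPerm] at habs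
    exact habs
  have b1 := wordLen_lb hB
  have b2 := wordLen_lb hBy
  have hbot : Fm z ⊓ Fm (z⁻¹ * negPerm n) = ⊥ := by
    apply le_antisymm _ bot_le
    calc Fm z ⊓ Fm (z⁻¹ * negPerm n) ≤ Fm (z * (z⁻¹ * negPerm n)) := Fm_mul_le
    _ = ⊥ := by rw [hzy, Fm_negPerm]
  have hsum := Submodule.finrank_sup_add_finrank_inf_eq (Fm z) (Fm (z⁻¹ * negPerm n))
  rw [hbot, finrank_bot] at hsum
  have hsuple : Fm z ⊔ Fm (z⁻¹ * negPerm n) ≤ Vneg n := sup_le inf_le_left inf_le_left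
  have hsupfin : finrank ℚ ((Fm z ⊔ Fm (z⁻¹ * negPerm n) : Submodule ℚ _)) ≤ n := by
    calc finrank ℚ ((Fm z ⊔ Fm (z⁻¹ * negPerm n) : Submodule ℚ _))
        ≤ finrank ℚ (Vneg n) := Submodule.finrank_mono hsuple
    _ = n := finrank_Vneg
  have hsupeq : Fm z ⊔ Fm (z⁻¹ * negPerm n) = Vneg n := by
    apply Submodule.eq_of_le_of_finrank_le hsuple
    rw [finrank_Vneg]
    omega
  have hfix : ∀ F ∈ Vneg n, rho (z * z) F = F := by
    intro F hF
    rw [← hsupeq] at hF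
    obtain ⟨Fa, hFa, Fb, hFb, rfl⟩ := Submodule.mem_sup.mp hF
    have ha : rho z Fa = Fa := (mem_Fm.mp hFa).2
    have hbv : Fb ∈ Vneg n := (mem_Fm.mp hFb).1
    have hb2 : rho (z⁻¹ * negPerm n) Fb = Fb := (mem_Fm.mp hFb).2
    have hnu : rho (negPerm n) Fb = -Fb := by
      funext p
      rw [Pi.neg_apply, rho_apply, negPerm_inv, negPerm_apply, hbv p]
    have hzb : rho z Fb = -Fb := by
      have h1 : rho z (rho (z⁻¹ * negPerm n) Fb) = rho z Fb := by rw [hb2]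
      rw [← LinearMap.comp_apply, ← rho_mul, hzy, hnu] at h1
      exact h1.symm
    rw [rho_mul, LinearMap.comp_apply, map_add, ha, hzb, map_add, ha, map_neg, hzb, neg_neg]
  have key : ∀ p : Fin n × Bool, (z * z)⁻¹ p = p := by
    intro p
    rcases p with ⟨j, b⟩
    have hE : (fun p' : Fin n × Bool => if p' = (j, true) then (1 : ℚ)
        else if p' = (j, false) then -1 else 0) ∈ Vneg n := by
      intro p'
      rcases p' with ⟨l, c⟩
      by_cases hl : l = j
      · subst hl
        cases c <;> simp [negp]
      · cases c <;> simp [negp, Prod.ext_iff, hl]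
    have h := congrFun (hfix _ hE) (j, b)
    rw [rho_apply] at h
    cases b
    · by_cases hx1 : (z * z)⁻¹ (j, false) = (j, true)
      · rw [if_pos hx1] at h
        simp only [Prod.ext_iff] at h
        norm_num at h
      · rw [if_neg hx1] at h
        by_cases hx2 : (z * z)⁻¹ (j, false) = (j, false)
        · exact hx2
        · rw [if_neg hx2] at h
          simp [Prod.ext_iff] at h
    · by_cases hx1 : (z * z)⁻¹ (j, true) = (j, true)
      · exact hx1
      · rw [if_neg hx1] at h
        by_cases hx2 : (z * z)⁻¹ (j, true) = (j, false)
        · rw [if_pos hx2] at h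
          simp only [Prod.ext_iff] at h
          norm_num at h
        · rw [if_neg hx2] at h
          simp [Prod.ext_iff] at h
  have hinv : (z * z)⁻¹ = 1 := Equiv.ext key
  rwa [inv_eq_one] at hinv

lemma z_partner {z : Equiv.Perm (Fin n × Bool)} (hB : inB z) (hz : z * z = 1) (i : Fin n) :
    z ((z (i, true)).1, true) = (i, (z (i, true)).2) := by
  have hq : z (i, true) = ((z (i, true)).1, (z (i, true)).2) := rfl
  have e := zinv_apply hz (i, true)
  rcases hb : (z (i, true)).2 with _ | _
  · have h1 : z ((z (i, true)).1, false) = (i, true) := by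
      rw [← hb, ← hq, e]
    have h2 : z ((z (i, true)).1, true) = negp (i, true) := by
      have := hB ((z (i, true)).1, false)
      simp only [negp, Bool.not_false] at this
      rw [this, h1]
      rfl
    rw [h2]
    rfl
  · have h1 : (((z (i, true)).1, true) : Fin n × Bool) = z (i, true) := by
      conv_rhs => rw [hq]
      rw [hb]
    rw [h1, e]

def zOf (σ : Equiv.Perm (Fin n)) (ε : Fin n → Bool) : (Fin n × Bool) → (Fin n × Bool) :=
  fun p => if p.2 then (σ p.1, ε p.1) else negp (σ p.1, ε p.1)

lemma zOf_true (σ : Equiv.Perm (Fin n)) (ε : Fin n → Bool) (i : Fin n) :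
    zOf σ ε (i, true) = (σ i, ε i) := rfl

lemma zOf_false (σ : Equiv.Perm (Fin n)) (ε : Fin n → Bool) (i : Fin n) :
    zOf σ ε (i, false) = negp (σ i, ε i) := rfl

lemma zOf_neg (σ : Equiv.Perm (Fin n)) (ε : Fin n → Bool) (p : Fin n × Bool) :
    zOf σ ε (negp p) = negp (zOf σ ε p) := by
  rcases p with ⟨l, c⟩
  cases c
  · show zOf σ ε (l, true) = negp (zOf σ ε (l, false))
    rw [zOf_true, zOf_false, negp_negp]
  · show zOf σ ε (l, false) = negp (zOf σ ε (l, true))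
    rw [zOf_true, zOf_false]

lemma zOf_invol {σ : Equiv.Perm (Fin n)} {ε : Fin n → Bool} (hσ : σ * σ = 1)
    (hε : ε ∘ σ = ε) : Function.Involutive (zOf σ ε) := by
  have base : ∀ i : Fin n, zOf σ ε (zOf σ ε (i, true)) = (i, true) := by
    intro i
    rw [zOf_true]
    have hσi : σ (σ i) = i := by
      have := Equiv.ext_iff.mp hσ i
      simpa using this
    have hεi : ε (σ i) = ε i := congrFun hε i
    rcases hb : ε i with _ | _
    · rw [zOf_false]
      rw [hσi]
      rw [hεi]
      rw [hb]
      rfl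
    · rw [zOf_true]
      rw [hσi]
      rw [hεi]
      rw [hb]
  intro p
  rcases p with ⟨i, c⟩
  cases c
  · have : ((i, false) : Fin n × Bool) = negp (i, true) := rfl
    rw [this, zOf_neg, zOf_neg, base]
  · exact base i

lemma sigma_invol {z : Equiv.Perm (Fin n × Bool)} (hB : inB z) (hz : z * z = 1) :
    Function.Involutive (fun i : Fin n => (z (i, true)).1) := by
  intro i
  have := congrArg Prod.fst (z_partner hB hz i)
  simpa using this

noncomputable def STequiv (n : ℕ) :
    {z : Equiv.Perm (Fin n × Bool) // inB z ∧ z * z = 1} ≃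
    {q : Equiv.Perm (Fin n) × (Fin n → Bool) // q.1 * q.1 = 1 ∧ q.2 ∘ q.1 = q.2} where
  toFun z := ⟨((sigma_invol z.2.1 z.2.2).toPerm, fun i => ((z : Equiv.Perm (Fin n × Bool)) (i, true)).2),
    by
      constructor
      · apply Equiv.ext
        intro i
        rw [Equiv.Perm.mul_apply]
        exact (sigma_invol z.2.1 z.2.2) i
      · funext i
        have := congrArg Prod.snd (z_partner z.2.1 z.2.2 i)
        simpa using this⟩
  invFun q := ⟨(zOf_invol q.2.1 q.2.2).toPerm,
    by
      constructor
      · exact fun p => zOf_neg q.1.1 q.1.2 p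
      · apply Equiv.ext
        intro p
        rw [Equiv.Perm.mul_apply]
        exact (zOf_invol q.2.1 q.2.2) p⟩
  left_inv := by
    rintro ⟨z, hB, hz⟩
    apply Subtype.ext
    apply Equiv.ext
    intro p
    show zOf _ _ p = z p
    rcases p with ⟨i, c⟩
    cases c
    · rw [zOf_false]
      show negp ((z (i, true)).1, (z (i, true)).2) = z (i, false)
      have : ((z (i, true)).1, (z (i, true)).2) = z (i, true) := rfl
      rw [this]
      have h2 := hB (i, true)
      simp only [negp, Bool.not_true] at h2
      rw [h2]
      rfl
    · rw [zOf_true]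
      rfl
  right_inv := by
    rintro ⟨⟨σ, ε⟩, hσ, hε⟩
    apply Subtype.ext
    apply Prod.ext
    · apply Equiv.ext
      intro i
      show (zOf σ ε (i, true)).1 = σ i
      rw [zOf_true]
    · funext i
      show (zOf σ ε (i, true)).2 = ε i
      rw [zOf_true]

noncomputable def Qf {n : ℕ} (s : Finset (Fin n)) : Finset (Equiv.Perm (Fin n) × (Fin n → Bool)) :=
  Finset.univ.filter (fun q => q.1 * q.1 = 1 ∧ (∀ i ∉ s, q.1 i = i) ∧ q.2 ∘ q.1 = q.2 ∧
    (∀ i ∉ s, q.2 i = true))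

lemma mem_Qf {s : Finset (Fin n)} {q : Equiv.Perm (Fin n) × (Fin n → Bool)} :
    q ∈ Qf s ↔ (q.1 * q.1 = 1 ∧ (∀ i ∉ s, q.1 i = i) ∧ q.2 ∘ q.1 = q.2 ∧
      (∀ i ∉ s, q.2 i = true)) := by
  simp [Qf]

lemma sigma_apply_apply {σ : Equiv.Perm (Fin n)} (hσ : σ * σ = 1) (i : Fin n) :
    σ (σ i) = i := by
  have := Equiv.ext_iff.mp hσ i
  simpa using this

lemma Qf_empty : (Qf (∅ : Finset (Fin n))).card = 1 := by
  rw [Finset.card_eq_one]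
  refine ⟨(1, fun _ => true), ?_⟩
  ext q
  rw [Finset.mem_singleton, mem_Qf]
  constructor
  · rintro ⟨h1, h2, h3, h4⟩
    have hσ : q.1 = 1 := Equiv.ext fun i => h2 i (by simp)
    have hε : q.2 = fun _ => true := funext fun i => h4 i (by simp)
    exact Prod.ext hσ hε
  · rintro rfl
    exact ⟨one_mul 1, fun i _ => rfl, rfl, fun i _ => rfl⟩

lemma invol_mul_swap {σ : Equiv.Perm (Fin n)} {a b : Fin n} (hσ : σ * σ = 1)
    (hc : Equiv.swap (σ a) (σ b) = Equiv.swap a b) :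
    (σ * Equiv.swap a b) * (σ * Equiv.swap a b) = 1 := by
  have hσinv : σ⁻¹ = σ := inv_eq_of_mul_eq_one_right hσ
  have hc2 : σ * Equiv.swap a b * σ = Equiv.swap a b := by
    have h := Equiv.swap_apply_apply σ a b
    rw [hσinv] at h
    rw [hc] at h
    exact h.symm
  calc (σ * Equiv.swap a b) * (σ * Equiv.swap a b)
      = (σ * Equiv.swap a b * σ) * Equiv.swap a b := by group
  _ = Equiv.swap a b * Equiv.swap a b := by rw [hc2]
  _ = 1 := Equiv.swap_mul_self a b

lemma Qf_fix_card {s : Finset (Fin n)} {a : Fin n} (ha : a ∈ s) :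
    ((Qf s).filter (fun q => q.1 a = a)).card = 2 * (Qf (s.erase a)).card := by
  have hpc : ((Finset.univ : Finset Bool) ×ˢ Qf (s.erase a)).card = 2 * (Qf (s.erase a)).card := by
    rw [Finset.card_product]
    simp
  rw [← hpc]
  apply Finset.card_bij' (i := fun q _ => ((q.2 a, (q.1, Function.update q.2 a true)) :
      Bool × (Equiv.Perm (Fin n) × (Fin n → Bool))))
    (j := fun r _ => ((r.2.1, Function.update r.2.2 a r.1) :
      Equiv.Perm (Fin n) × (Fin n → Bool)))
  · -- hi
    intro q hq
    rw [Finset.mem_filter, mem_Qf] at hq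
    obtain ⟨⟨h1, h2, h3, h4⟩, hfa⟩ := hq
    rw [Finset.mem_product, mem_Qf]
    refine ⟨Finset.mem_univ _, h1, ?_, ?_, ?_⟩
    · intro i hi
      by_cases hia : i = a
      · subst hia; exact hfa
      · exact h2 i (fun hs => hi (Finset.mem_erase.mpr ⟨hia, hs⟩))
    · funext l
      show Function.update q.2 a true (q.1 l) = Function.update q.2 a true l
      by_cases hla : l = a
      · subst hla; rw [hfa]
      · have hql : q.1 l ≠ a := fun h => hla (q.1.injective (by rw [h, hfa]))
        rw [Function.update_of_ne hql, Function.update_of_ne hla]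
        exact congrFun h3 l
    · intro i hi
      show Function.update q.2 a true i = true
      by_cases hia : i = a
      · subst hia; rw [Function.update_self]
      · rw [Function.update_of_ne hia]
        exact h4 i (fun hs => hi (Finset.mem_erase.mpr ⟨hia, hs⟩))
  · -- hj
    intro r hr
    rw [Finset.mem_product, mem_Qf] at hr
    obtain ⟨-, g1, g2, g3, g4⟩ := hr
    have hfa : r.2.1 a = a := g2 a (Finset.notMem_erase a s)
    rw [Finset.mem_filter, mem_Qf]
    refine ⟨⟨g1, ?_, ?_, ?_⟩, hfa⟩
    · intro i hi
      exact g2 i (fun he => hi (Finset.mem_erase.mp he).2)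
    · funext l
      show Function.update r.2.2 a r.1 (r.2.1 l) = Function.update r.2.2 a r.1 l
      by_cases hla : l = a
      · subst hla; rw [hfa]
      · have hql : r.2.1 l ≠ a := fun h => hla (r.2.1.injective (by rw [h, hfa]))
        rw [Function.update_of_ne hql, Function.update_of_ne hla]
        exact congrFun g3 l
    · intro i hi
      have hia : i ≠ a := fun h => hi (h ▸ ha)
      show Function.update r.2.2 a r.1 i = true
      rw [Function.update_of_ne hia]
      exact g4 i (fun he => hi (Finset.mem_erase.mp he).2)
  · -- left
    intro q _
    refine Prod.ext rfl (funext fun l => ?_)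
    show Function.update (Function.update q.2 a true) a (q.2 a) l = q.2 l
    by_cases hla : l = a
    · subst hla; rw [Function.update_self]
    · rw [Function.update_of_ne hla, Function.update_of_ne hla]
  · -- right
    intro r hr
    rw [Finset.mem_product, mem_Qf] at hr
    obtain ⟨-, g1, g2, g3, g4⟩ := hr
    have hea : r.2.2 a = true := g4 a (Finset.notMem_erase a s)
    refine Prod.ext ?_ (Prod.ext rfl (funext fun l => ?_))
    · show Function.update r.2.2 a r.1 a = r.1
      rw [Function.update_self]
    · show Function.update (Function.update r.2.2 a r.1) a true l = r.2.2 l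
      by_cases hla : l = a
      · subst hla; rw [Function.update_self, hea]
      · rw [Function.update_of_ne hla, Function.update_of_ne hla]

lemma Qf_move_card {s : Finset (Fin n)} {a : Fin n} (ha : a ∈ s) :
    ((Qf s).filter (fun q => ¬ q.1 a = a)).card =
      ∑ b ∈ s.erase a, 2 * (Qf ((s.erase a).erase b)).card := by
  have hpc : ((s.erase a).sigma
      (fun b => (Finset.univ : Finset Bool) ×ˢ Qf ((s.erase a).erase b))).card =
      ∑ b ∈ s.erase a, 2 * (Qf ((s.erase a).erase b)).card := by
    rw [Finset.card_sigma]
    refine Finset.sum_congr rfl (fun b _ => ?_)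
    rw [Finset.card_product]
    simp
  rw [← hpc]
  apply Finset.card_bij'
    (i := fun q _ => (⟨q.1 a, (q.2 a, (q.1 * Equiv.swap a (q.1 a),
      Function.update (Function.update q.2 a true) (q.1 a) true))⟩ :
      (_ : Fin n) × (Bool × (Equiv.Perm (Fin n) × (Fin n → Bool)))))
    (j := fun r _ => ((r.2.2.1 * Equiv.swap a r.1,
      Function.update (Function.update r.2.2.2 a r.2.1) r.1 r.2.1) :
      Equiv.Perm (Fin n) × (Fin n → Bool)))
  · -- hi
    intro q hq
    rw [Finset.mem_filter, mem_Qf] at hq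
    obtain ⟨⟨h1, h2, h3, h4⟩, hna⟩ := hq
    have hσb : q.1 (q.1 a) = a := sigma_apply_apply h1 a
    have hab : q.1 a ≠ a := hna
    have hbs : q.1 a ∈ s := by
      by_contra hb
      have h := h2 (q.1 a) hb
      rw [hσb] at h
      exact hab h.symm
    have hfa' : (q.1 * Equiv.swap a (q.1 a)) a = a := by
      rw [Equiv.Perm.mul_apply, Equiv.swap_apply_left, hσb]
    have hfb' : (q.1 * Equiv.swap a (q.1 a)) (q.1 a) = q.1 a := by
      rw [Equiv.Perm.mul_apply, Equiv.swap_apply_right]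
    rw [Finset.mem_sigma]
    refine ⟨Finset.mem_erase.mpr ⟨hab, hbs⟩, ?_⟩
    rw [Finset.mem_product, mem_Qf]
    refine ⟨Finset.mem_univ _, ?_, ?_, ?_, ?_⟩
    · exact invol_mul_swap h1 (by rw [hσb]; exact Equiv.swap_comm _ _)
    · intro i hi
      by_cases hia : i = a
      · subst hia; exact hfa'
      by_cases hib : i = q.1 a
      · subst hib; exact hfb'
      · have his : i ∉ s := fun hs =>
          hi (Finset.mem_erase.mpr ⟨hib, Finset.mem_erase.mpr ⟨hia, hs⟩⟩)
        rw [Equiv.Perm.mul_apply, Equiv.swap_apply_of_ne_of_ne hia hib, h2 i his]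
    · funext l
      show Function.update (Function.update q.2 a true) (q.1 a) true
          ((q.1 * Equiv.swap a (q.1 a)) l) =
        Function.update (Function.update q.2 a true) (q.1 a) true l
      by_cases hla : l = a
      · subst hla; rw [hfa']
      by_cases hlb : l = q.1 a
      · subst hlb; rw [hfb']
      · have hn1 : q.1 l ≠ a := fun h => hlb (q.1.injective (by rw [h, hσb]))
        have hn2 : q.1 l ≠ q.1 a := fun h => hla (q.1.injective h)
        rw [Equiv.Perm.mul_apply, Equiv.swap_apply_of_ne_of_ne hla hlb,
          Function.update_of_ne hn2, Function.update_of_ne hn1,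
          Function.update_of_ne hlb, Function.update_of_ne hla]
        exact congrFun h3 l
    · intro i hi
      show Function.update (Function.update q.2 a true) (q.1 a) true i = true
      by_cases hib : i = q.1 a
      · subst hib; rw [Function.update_self]
      by_cases hia : i = a
      · subst hia; rw [Function.update_of_ne hib, Function.update_self]
      · have his : i ∉ s := fun hs =>
          hi (Finset.mem_erase.mpr ⟨hib, Finset.mem_erase.mpr ⟨hia, hs⟩⟩)
        rw [Function.update_of_ne hib, Function.update_of_ne hia]
        exact h4 i his
  · -- hj
    rintro ⟨b, c, σ, ε⟩ hr
    rw [Finset.mem_sigma, Finset.mem_product, mem_Qf] at hr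
    obtain ⟨hb, -, g1, g2, g3, g4⟩ := hr
    have hba : b ≠ a := (Finset.mem_erase.mp hb).1
    have hbs : b ∈ s := (Finset.mem_erase.mp hb).2
    have hfa : σ a = a := g2 a (fun he => (Finset.mem_erase.mp (Finset.mem_erase.mp he).2).1 rfl)
    have hfb : σ b = b := g2 b (Finset.notMem_erase b _)
    have h''a : (σ * Equiv.swap a b) a = b := by
      rw [Equiv.Perm.mul_apply, Equiv.swap_apply_left, hfb]
    have h''b : (σ * Equiv.swap a b) b = a := by
      rw [Equiv.Perm.mul_apply, Equiv.swap_apply_right, hfa]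
    rw [Finset.mem_filter, mem_Qf]
    refine ⟨⟨?_, ?_, ?_, ?_⟩, ?_⟩
    · exact invol_mul_swap g1 (by rw [hfa, hfb])
    · intro i hi
      have hia : i ≠ a := fun h => hi (h ▸ ha)
      have hib : i ≠ b := fun h => hi (h ▸ hbs)
      have hie : i ∉ (s.erase a).erase b := fun he =>
        hi (Finset.mem_erase.mp (Finset.mem_erase.mp he).2).2
      show (σ * Equiv.swap a b) i = i
      rw [Equiv.Perm.mul_apply, Equiv.swap_apply_of_ne_of_ne hia hib, g2 i hie]
    · funext l
      show Function.update (Function.update ε a c) b c ((σ * Equiv.swap a b) l) =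
        Function.update (Function.update ε a c) b c l
      have hεa : Function.update (Function.update ε a c) b c a = c := by
        rw [Function.update_of_ne (Ne.symm hba), Function.update_self]
      have hεb : Function.update (Function.update ε a c) b c b = c := by
        rw [Function.update_self]
      by_cases hla : l = a
      · subst hla; rw [h''a, hεa, hεb]
      by_cases hlb : l = b
      · subst hlb; rw [h''b, hεa, hεb]
      · have hσl : σ l ≠ a := fun h => hla (σ.injective (by rw [h, hfa]))
        have hσl2 : σ l ≠ b := fun h => hlb (σ.injective (by rw [h, hfb]))
        rw [Equiv.Perm.mul_apply, Equiv.swap_apply_of_ne_of_ne hla hlb,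
          Function.update_of_ne hσl2, Function.update_of_ne hσl,
          Function.update_of_ne hlb, Function.update_of_ne hla]
        exact congrFun g3 l
    · intro i hi
      have hia : i ≠ a := fun h => hi (h ▸ ha)
      have hib : i ≠ b := fun h => hi (h ▸ hbs)
      have hie : i ∉ (s.erase a).erase b := fun he =>
        hi (Finset.mem_erase.mp (Finset.mem_erase.mp he).2).2
      show Function.update (Function.update ε a c) b c i = true
      rw [Function.update_of_ne hib, Function.update_of_ne hia]
      exact g4 i hie
    · show (σ * Equiv.swap a b) a ≠ a
      rw [h''a]
      exact hba
  · -- left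
    intro q hq
    rw [Finset.mem_filter, mem_Qf] at hq
    obtain ⟨⟨h1, h2, h3, h4⟩, hna⟩ := hq
    have hεba : q.2 (q.1 a) = q.2 a := congrFun h3 a
    refine Prod.ext ?_ (funext fun l => ?_)
    · show q.1 * Equiv.swap a (q.1 a) * Equiv.swap a (q.1 a) = q.1
      rw [mul_assoc, Equiv.swap_mul_self, mul_one]
    · show Function.update (Function.update
          (Function.update (Function.update q.2 a true) (q.1 a) true) a (q.2 a))
          (q.1 a) (q.2 a) l = q.2 l
      by_cases hlb : l = q.1 a
      · subst hlb; rw [Function.update_self, hεba]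
      by_cases hla : l = a
      · subst hla
        rw [Function.update_of_ne hlb, Function.update_self]
      · rw [Function.update_of_ne hlb, Function.update_of_ne hla,
          Function.update_of_ne hlb, Function.update_of_ne hla]
  · -- right
    rintro ⟨b, c, σ, ε⟩ hr
    rw [Finset.mem_sigma, Finset.mem_product, mem_Qf] at hr
    obtain ⟨hb, -, g1, g2, g3, g4⟩ := hr
    have hba : b ≠ a := (Finset.mem_erase.mp hb).1
    have hfa : σ a = a := g2 a (fun he => (Finset.mem_erase.mp (Finset.mem_erase.mp he).2).1 rfl)
    have hfb : σ b = b := g2 b (Finset.notMem_erase b _)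
    have hεat : ε a = true := g4 a (fun he => (Finset.mem_erase.mp (Finset.mem_erase.mp he).2).1 rfl)
    have hεbt : ε b = true := g4 b (Finset.notMem_erase b _)
    have e1 : (σ * Equiv.swap a b) a = b := by
      rw [Equiv.Perm.mul_apply, Equiv.swap_apply_left, hfb]
    show (⟨(σ * Equiv.swap a b) a, _⟩ : (_ : Fin n) × (Bool × (Equiv.Perm (Fin n) × (Fin n → Bool)))) = _
    rw [e1]
    refine congrArg (Sigma.mk b) (Prod.ext ?_ (Prod.ext ?_ ?_))
    · show Function.update (Function.update ε a c) b c a = c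
      rw [Function.update_of_ne (Ne.symm hba), Function.update_self]
    · show σ * Equiv.swap a b * Equiv.swap a b = σ
      rw [mul_assoc, Equiv.swap_mul_self, mul_one]
    · show Function.update (Function.update
          (Function.update (Function.update ε a c) b c) a true) b true = ε
      funext l
      by_cases hlb : l = b
      · subst hlb; rw [Function.update_self, hεbt]
      by_cases hla : l = a
      · subst hla
        rw [Function.update_of_ne hlb, Function.update_self, hεat]
      · rw [Function.update_of_ne hlb, Function.update_of_ne hla,
          Function.update_of_ne hlb, Function.update_of_ne hla]

def Fcnt : ℕ → ℕ
  | 0 => 1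
  | 1 => 2
  | (m + 2) => 2 * Fcnt (m + 1) + 2 * (m + 1) * Fcnt m

lemma Qf_card_eq : ∀ (m : ℕ) (s : Finset (Fin n)), s.card = m → (Qf s).card = Fcnt m := by
  intro m
  induction m using Nat.strong_induction_on with
  | _ m ih =>
    intro s hs
    rcases m with _ | m
    · have he : s = ∅ := Finset.card_eq_zero.mp hs
      rw [he, Qf_empty]
      rfl
    · obtain ⟨a, ha⟩ := Finset.card_pos.mp (by omega : 0 < s.card)
      have hsplit := Finset.card_filter_add_card_filter_not
        (s := Qf s) (p := fun q => q.1 a = a)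
      have h1 := Qf_fix_card ha
      have h2 := Qf_move_card ha
      have hca : (s.erase a).card = m := by
        rw [Finset.card_erase_of_mem ha, hs]
        omega
      have hQa : (Qf (s.erase a)).card = Fcnt m := ih m (Nat.lt_succ_self m) _ hca
      rcases m with _ | m'
      · have he : s.erase a = ∅ := Finset.card_eq_zero.mp hca
        rw [he, Finset.sum_empty] at h2
        have : (Qf s).card = 2 * Fcnt 0 + 0 := by
          rw [← hsplit, h1, h2, hQa]
        rw [this]
        rfl
      · have hsum : ∑ b ∈ s.erase a, 2 * (Qf ((s.erase a).erase b)).card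
            = (m' + 1) * (2 * Fcnt m') := by
          rw [Finset.sum_congr rfl (fun b hb => ?_), Finset.sum_const, smul_eq_mul, hca]
          have hcb : ((s.erase a).erase b).card = m' := by
            rw [Finset.card_erase_of_mem hb, hca]
            omega
          rw [ih m' (by omega) _ hcb]
        have : (Qf s).card = 2 * Fcnt (m' + 1) + (m' + 1) * (2 * Fcnt m') := by
          rw [← hsplit, h1, h2, hQa, hsum]
        rw [this]
        show _ = 2 * Fcnt (m' + 1) + 2 * (m' + 1) * Fcnt m'
        ring

def Gs (m : ℕ) : ℕ := ∑ k ∈ Finset.range (m + 1), m.choose (2 * k) * 2 ^ (m - k) * dfac k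

lemma dfac_succ (k : ℕ) : dfac (k + 1) = dfac k * (2 * k + 1) :=
  Finset.prod_range_succ _ _

lemma Gs_zero : Gs 0 = 1 := by simp [Gs, dfac]

lemma Gs_one : Gs 1 = 2 := by
  rw [Gs]
  rw [Finset.sum_range_succ, Finset.sum_range_succ, Finset.sum_range_zero]
  norm_num [dfac]

lemma term_key (m k : ℕ) (hk : k ≤ m) :
    (m + 2).choose (2 * k + 2) * 2 ^ (m + 1 - k) * dfac (k + 1)
      = 2 * ((m + 1).choose (2 * k + 2) * 2 ^ (m - k) * dfac (k + 1))
        + 2 * (m + 1) * (m.choose (2 * k) * 2 ^ (m - k) * dfac k) := by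
  have p1 : (m + 2).choose (2 * k + 2) = (m + 1).choose (2 * k + 1) + (m + 1).choose (2 * k + 2) :=
    Nat.choose_succ_succ _ _
  have p2 : (m + 1).choose (2 * k + 1) = m.choose (2 * k) + m.choose (2 * k + 1) :=
    Nat.choose_succ_succ _ _
  have key : m.choose (2 * k + 1) * (2 * k + 1) = m.choose (2 * k) * (m - 2 * k) :=
    Nat.choose_succ_right_eq m (2 * k)
  have key2 : (m.choose (2 * k) + m.choose (2 * k + 1)) * (2 * k + 1) = (m + 1) * m.choose (2 * k) := by
    by_cases h : 2 * k ≤ m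
    · rw [add_mul, key, ← Nat.mul_add]
      rw [show 2 * k + 1 + (m - 2 * k) = m + 1 from by omega, Nat.mul_comm]
    · have h0 : m.choose (2 * k) = 0 := Nat.choose_eq_zero_of_lt (by omega)
      have h1 : m.choose (2 * k + 1) = 0 := Nat.choose_eq_zero_of_lt (by omega)
      simp [h0, h1]
  have hp : (2 : ℕ) ^ (m + 1 - k) = 2 * 2 ^ (m - k) := by
    rw [show m + 1 - k = (m - k) + 1 from by omega, pow_succ, Nat.mul_comm]
  have hsub : 2 * (m + 1) * (m.choose (2 * k) * 2 ^ (m - k) * dfac k)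
      = 2 * 2 ^ (m - k) * dfac k * ((m.choose (2 * k) + m.choose (2 * k + 1)) * (2 * k + 1)) := by
    rw [key2]
    ring
  rw [p1, p2, hp, dfac_succ, hsub]
  ring

lemma Gs_peel (M : ℕ) : Gs (M + 1) =
    2 ^ (M + 1) + ∑ k ∈ Finset.range (M + 1), (M + 1).choose (2 * k + 2) * 2 ^ (M - k) * dfac (k + 1) := by
  rw [Gs, Finset.sum_range_succ']
  rw [add_comm]
  congr 1
  · simp [dfac]
  · apply Finset.sum_congr rfl
    intro k _
    rw [show 2 * (k + 1) = 2 * k + 2 from by ring, show M + 1 - (k + 1) = M - k from by omega]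

lemma Gs_rec (m : ℕ) : Gs (m + 2) = 2 * Gs (m + 1) + 2 * (m + 1) * Gs m := by
  have e2 := Gs_peel (m + 1)
  have e1 := Gs_peel m
  have e3 : ∑ k ∈ Finset.range (m + 2), (m + 2).choose (2 * k + 2) * 2 ^ (m + 1 - k) * dfac (k + 1)
      = ∑ k ∈ Finset.range (m + 1), (m + 2).choose (2 * k + 2) * 2 ^ (m + 1 - k) * dfac (k + 1) := by
    rw [Finset.sum_range_succ]
    rw [Nat.choose_eq_zero_of_lt (by omega : m + 2 < 2 * (m + 1) + 2)]
    simp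
  rw [e2, e3, e1, Gs]
  rw [Finset.sum_congr rfl (fun k hk => term_key m k (by
    have := Finset.mem_range.mp hk
    omega))]
  rw [Finset.sum_add_distrib, ← Finset.mul_sum, ← Finset.mul_sum]
  ring

lemma Fcnt_eq_Gs : ∀ m, Fcnt m = Gs m := by
  intro m
  induction m using Nat.strong_induction_on with
  | _ m ih =>
    match m with
    | 0 => rw [Gs_zero]; rfl
    | 1 => rw [Gs_one]; rfl
    | (m + 2) =>
      show 2 * Fcnt (m + 1) + 2 * (m + 1) * Fcnt m = Gs (m + 2)
      rw [ih (m + 1) (by omega), ih m (by omega), Gs_rec]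

lemma Gs_eq_sum (m : ℕ) :
    Gs m = ∑ k ∈ Finset.range (m / 2 + 1), m.choose (2 * k) * 2 ^ (m - k) * dfac k := by
  rw [Gs]
  apply (Finset.sum_subset ?_ ?_).symm
  · intro k hk
    rw [Finset.mem_range] at hk ⊢
    omega
  · intro k _ hk
    rw [Finset.mem_range] at hk
    rw [Nat.choose_eq_zero_of_lt (by omega : m < 2 * k)]
    simp


/-- the number of elements of `L_n = [e,[1][2]⋯[n]] ⊆ Abs(B_n)` is
`∑_{k=0}^{⌊n/2⌋} C(n,2k) 2^{n-k} (2k-1)!!`. -/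
theorem stmt_11 (n : ℕ) :
    Nat.card (Ln n) =
      ∑ k ∈ Finset.range (n / 2 + 1), n.choose (2 * k) * 2 ^ (n - k) * dfac k := by
  have h1 : Ln n = {z | inB z ∧ z * z = 1} := by
    ext z
    exact ⟨fun h => ⟨h.1, absLe_inv h.1 h.2⟩, fun h => ⟨h.1, inv_absLe h.1 h.2⟩⟩
  rw [h1]
  have h2 : Nat.card {z : Equiv.Perm (Fin n × Bool) // inB z ∧ z * z = 1} =
      Nat.card {q : Equiv.Perm (Fin n) × (Fin n → Bool) // q.1 * q.1 = 1 ∧ q.2 ∘ q.1 = q.2} :=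
    Nat.card_congr (STequiv n)
  have h3 : Nat.card {q : Equiv.Perm (Fin n) × (Fin n → Bool) // q.1 * q.1 = 1 ∧ q.2 ∘ q.1 = q.2}
      = (Qf (Finset.univ : Finset (Fin n))).card := by
    have e : {q : Equiv.Perm (Fin n) × (Fin n → Bool) // q.1 * q.1 = 1 ∧ q.2 ∘ q.1 = q.2}
        ≃ {q // q ∈ Qf (Finset.univ : Finset (Fin n))} :=
      Equiv.subtypeEquivRight (fun q => by
        rw [mem_Qf]
        constructor
        · rintro ⟨a, b⟩
          exact ⟨a, fun i hi => absurd (Finset.mem_univ i) hi, b,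
            fun i hi => absurd (Finset.mem_univ i) hi⟩
        · rintro ⟨a, -, b, -⟩
          exact ⟨a, b⟩)
    rw [Nat.card_congr e, Nat.card_eq_fintype_card, Fintype.card_coe]
  have h4 : (Qf (Finset.univ : Finset (Fin n))).card = Fcnt n :=
    Qf_card_eq n Finset.univ (by simp)
  calc Nat.card {z : Equiv.Perm (Fin n × Bool) | inB z ∧ z * z = 1}
      = Nat.card {z : Equiv.Perm (Fin n × Bool) // inB z ∧ z * z = 1} := rfl
  _ = Fcnt n := by rw [h2, h3, h4]
  _ = _ := by rw [Fcnt_eq_Gs, Gs_eq_sum]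
end
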